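/- arXiv:1405.0799 — 6 statements merged into one kernel-verified Lean document; each statement's English description precedes it below -/
import Mathlib

section
/- Let A = {a_1, a_2, ..., a_n} be a set of n distinct real numbers with a_1 < a_2 < ... < a_n and n = 2k even. Then the permutation (a_1, a_n, a_2, a_{n-1}, ..., a_{k-1}, a_{k+2}, a_k, a_{k+1}) (alternating smallest remaining, largest remaining) has pairwise distinct absolute differences of consecutive terms. -/
theorem stmt_1 (n k : ℕ) (hk : 1 ≤ k) (hn : n = 2 * k) (a : ℕ → ℝ)
    (hmono : ∀ i, 1 ≤ i → i < n → a i < a (i + 1))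
    (b : ℕ → ℝ)
    (hb : ∀ j, b j = if j % 2 = 1 then a ((j + 1) / 2) else a (n + 1 - j / 2)) :
    ∀ i ∈ Set.Icc 1 (n - 1), ∀ j ∈ Set.Icc 1 (n - 1),
      |b (i + 1) - b i| = |b (j + 1) - b j| → i = j := by
  have ha_le : ∀ i j : ℕ, 1 ≤ i → i ≤ j → j ≤ n → a i ≤ a j := by
    intro i j h1 h2 h3
    induction j with
    | zero => omega
    | succ j ih =>
      rcases Nat.lt_or_ge i (j + 1) with h | h
      · have hij : i ≤ j := by omega
        exact (ih hij (by omega)).trans (hmono j (by omega) (by omega)).le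
      · have : i = j + 1 := by omega
        rw [this]
  have ha_lt : ∀ i j : ℕ, 1 ≤ i → i < j → j ≤ n → a i < a j := by
    intro i j h1 h2 h3
    exact lt_of_lt_of_le (hmono i h1 (by omega)) (ha_le (i + 1) j (by omega) (by omega) h3)
  have key : ∀ i, 1 ≤ i → i ≤ n - 1 →
      |b (i + 1) - b i| = a (n + 1 - (i + 1) / 2) - a (i / 2 + 1) := by
    intro i h1 h2
    rcases Nat.mod_two_eq_zero_or_one i with h | h
    · rw [hb, hb, if_pos (by omega), if_neg (by omega)]
      have e1 : (i + 1 + 1) / 2 = i / 2 + 1 := by omega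
      have e2 : n + 1 - (i + 1) / 2 = n + 1 - i / 2 := by
        have : (i + 1) / 2 = i / 2 := by omega
        rw [this]
      rw [e1, e2, abs_sub_comm, abs_of_nonneg]
      have : a (i / 2 + 1) ≤ a (n + 1 - i / 2) := by
        apply ha_le <;> omega
      linarith
    · rw [hb, hb, if_neg (by omega), if_pos (by omega)]
      have e1 : (i + 1) / 2 = i / 2 + 1 := by omega
      have e2 : n + 1 - (i + 1) / 2 = n + 1 - (i + 1) / 2 := rfl
      have e3 : n + 1 - (i / 2 + 1) = n + 1 - (i + 1) / 2 := by omega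
      rw [e1, e3, abs_of_nonneg]
      have : a (i / 2 + 1) ≤ a (n + 1 - (i + 1) / 2) := by
        apply ha_le <;> omega
      linarith
  have hdec : ∀ i j, 1 ≤ i → i < j → j ≤ n - 1 →
      a (n + 1 - (j + 1) / 2) - a (j / 2 + 1) <
        a (n + 1 - (i + 1) / 2) - a (i / 2 + 1) := by
    intro i j h1 h2 h3
    rcases Nat.lt_or_ge (i / 2) (j / 2) with h | h
    · have hl : a (i / 2 + 1) < a (j / 2 + 1) := ha_lt _ _ (by omega) (by omega) (by omega)
      have hh : a (n + 1 - (j + 1) / 2) ≤ a (n + 1 - (i + 1) / 2) := by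
        apply ha_le <;> omega
      linarith
    · have hq : (i + 1) / 2 < (j + 1) / 2 := by omega
      have hl : a (i / 2 + 1) ≤ a (j / 2 + 1) := by apply ha_le <;> omega
      have hh : a (n + 1 - (j + 1) / 2) < a (n + 1 - (i + 1) / 2) := by
        apply ha_lt <;> omega
      linarith
  intro i hi j hj heq
  simp only [Set.mem_Icc] at hi hj
  rw [key i hi.1 hi.2, key j hj.1 hj.2] at heq
  rcases lt_trichotomy i j with h | h | h
  · exact absurd heq (ne_of_gt (hdec i j hi.1 h hj.2))
  · exact h
  · exact absurd heq (ne_of_lt (hdec j i hj.1 h hi.2))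
end

section
/- Call a permutation a = (a_1,...,a_n) of {1,...,n} good if its n-1 consecutive absolute differences are pairwise distinct and either (i) a_i ≥ ⌈(n+1)/2⌉ for all odd indices i and a_i < ⌈(n+1)/2⌉ for all even indices i, or (ii) a_i ≤ ⌊(n+1)/2⌋ for all odd i and a_i > ⌊(n+1)/2⌋ for all even i. If a is good and satisfies condition (i), then the sequence b with b_i = a_i - ⌊n/2⌋ for odd i and b_i = a_i + ⌊(n+1)/2⌋ for even i is again a good permutation of {1,...,n}, satisfying condition (ii). -/
/-- `a` (restricted to indices `1,…,n`) is a permutation of `{1,…,n}`. -/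
def IsPermOn (n : ℕ) (a : ℕ → ℤ) : Prop :=
  Set.InjOn a (Set.Icc 1 n) ∧ ∀ i ∈ Set.Icc 1 n, a i ∈ Set.Icc (1 : ℤ) (n : ℤ)

/-- The `n-1` consecutive absolute differences of `a` are pairwise distinct. -/
def DistinctDiffs (n : ℕ) (a : ℕ → ℤ) : Prop :=
  ∀ i ∈ Set.Icc 1 (n - 1), ∀ j ∈ Set.Icc 1 (n - 1),
    |a (i + 1) - a i| = |a (j + 1) - a j| → i = j

/-- Condition (i): odd-index terms are `≥ ⌈(n+1)/2⌉`, even-index terms are `< ⌈(n+1)/2⌉`. -/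
def CondI (n : ℕ) (a : ℕ → ℤ) : Prop :=
  (∀ i ∈ Set.Icc 1 n, Odd i → (((n + 2) / 2 : ℕ) : ℤ) ≤ a i) ∧
  (∀ i ∈ Set.Icc 1 n, Even i → a i < (((n + 2) / 2 : ℕ) : ℤ))

/-- Condition (ii): odd-index terms are `≤ ⌊(n+1)/2⌋`, even-index terms are `> ⌊(n+1)/2⌋`. -/
def CondII (n : ℕ) (a : ℕ → ℤ) : Prop :=
  (∀ i ∈ Set.Icc 1 n, Odd i → a i ≤ (((n + 1) / 2 : ℕ) : ℤ)) ∧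
  (∀ i ∈ Set.Icc 1 n, Even i → (((n + 1) / 2 : ℕ) : ℤ) < a i)

/-- A good permutation of `{1,…,n}`. -/
def Good (n : ℕ) (a : ℕ → ℤ) : Prop :=
  IsPermOn n a ∧ DistinctDiffs n a ∧ (CondI n a ∨ CondII n a)

theorem stmt_4 (n : ℕ) (a : ℕ → ℤ) (ha : Good n a) (hI : CondI n a)
    (b : ℕ → ℤ)
    (hb : ∀ i, b i = if Odd i then a i - ((n / 2 : ℕ) : ℤ)
                     else a i + (((n + 1) / 2 : ℕ) : ℤ)) :
    Good n b ∧ CondII n b := by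
  obtain ⟨⟨hinj, hrange⟩, hdiff, _⟩ := ha
  obtain ⟨hI1, hI2⟩ := hI
  have h1 : ((n + 2) / 2 : ℕ) = n / 2 + 1 := by omega
  have h2 : n / 2 + (n + 1) / 2 = n := by omega
  -- values at odd indices
  have hodd : ∀ i ∈ Set.Icc 1 n, Odd i →
      b i = a i - ((n / 2 : ℕ) : ℤ) ∧ 1 ≤ b i ∧ b i ≤ (((n + 1) / 2 : ℕ) : ℤ) := by
    intro i hi hoi
    have e : b i = a i - ((n / 2 : ℕ) : ℤ) := by rw [hb i, if_pos hoi]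
    have hlo := hI1 i hi hoi
    have hhi := (hrange i hi).2
    refine ⟨e, ?_, ?_⟩ <;> rw [e] <;> omega
  have heven : ∀ i ∈ Set.Icc 1 n, Even i →
      b i = a i + (((n + 1) / 2 : ℕ) : ℤ) ∧ (((n + 1) / 2 : ℕ) : ℤ) < b i ∧ b i ≤ n := by
    intro i hi hei
    have e : b i = a i + (((n + 1) / 2 : ℕ) : ℤ) := by
      rw [hb i, if_neg (Nat.not_odd_iff_even.mpr hei)]
    have hlo := (hrange i hi).1
    have hhi := hI2 i hi hei
    refine ⟨e, ?_, ?_⟩ <;> rw [e] <;> omega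
  have hII : CondII n b := by
    constructor
    · intro i hi hoi; exact (hodd i hi hoi).2.2
    · intro i hi hei; exact (heven i hi hei).2.1
  refine ⟨⟨⟨?_, ?_⟩, ?_, Or.inr hII⟩, hII⟩
  · -- injective
    intro i hi j hj hij
    rcases Nat.even_or_odd i with hei | hoi <;> rcases Nat.even_or_odd j with hej | hoj
    · obtain ⟨ei, _, _⟩ := heven i hi hei
      obtain ⟨ej, _, _⟩ := heven j hj hej
      exact hinj hi hj (by rw [ei, ej] at hij; omega)
    · obtain ⟨_, hbi, _⟩ := heven i hi hei
      obtain ⟨_, _, hbj⟩ := hodd j hj hoj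
      omega
    · obtain ⟨_, _, hbi⟩ := hodd i hi hoi
      obtain ⟨_, hbj, _⟩ := heven j hj hej
      omega
    · obtain ⟨ei, _, _⟩ := hodd i hi hoi
      obtain ⟨ej, _, _⟩ := hodd j hj hoj
      exact hinj hi hj (by rw [ei, ej] at hij; omega)
  · -- range
    intro i hi
    rcases Nat.even_or_odd i with hei | hoi
    · obtain ⟨_, h3, h4⟩ := heven i hi hei
      exact ⟨by omega, h4⟩
    · obtain ⟨_, h3, h4⟩ := hodd i hi hoi
      refine ⟨h3, by omega⟩
  · -- distinct diffs
    have key : ∀ i ∈ Set.Icc 1 (n - 1),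
        |b (i + 1) - b i| = (n : ℤ) - |a (i + 1) - a i| := by
      intro i hi
      simp only [Set.mem_Icc] at hi
      have hi1 : i ∈ Set.Icc 1 n := by simp only [Set.mem_Icc]; omega
      have hi2 : i + 1 ∈ Set.Icc 1 n := by simp only [Set.mem_Icc]; omega
      rcases Nat.even_or_odd i with hei | hoi
      · have hoi1 : Odd (i + 1) := Even.add_one hei
        obtain ⟨ei, bi1, bi2⟩ := heven i hi1 hei
        obtain ⟨ei', bi1', bi2'⟩ := hodd (i + 1) hi2 hoi1
        have h3 := hI2 i hi1 hei
        have h4 := hI1 (i + 1) hi2 hoi1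
        rw [ei, ei']
        rw [abs_of_nonpos (by omega), abs_of_nonneg (by omega)]
        omega
      · have hei1 : Even (i + 1) := Odd.add_one hoi
        obtain ⟨ei, bi1, bi2⟩ := hodd i hi1 hoi
        obtain ⟨ei', bi1', bi2'⟩ := heven (i + 1) hi2 hei1
        have h3 := hI1 i hi1 hoi
        have h4 := hI2 (i + 1) hi2 hei1
        rw [ei, ei']
        rw [abs_of_nonneg (by omega), abs_of_nonpos (by omega)]
        omega
    intro i hi j hj heq
    rw [key i hi, key j hj] at heq
    exact hdiff i hi j hj (by omega)
end

section
/- Let a = (a_1,...,a_n) be a good permutation of {1,...,n} satisfying condition (i) (odd-index terms ≥ ⌈(n+1)/2⌉, even-index terms < ⌈(n+1)/2⌉), and define b_i = a_i - ⌊n/2⌋ for odd i and b_i = a_i + ⌊(n+1)/2⌋ for even i. Then for every index 1 ≤ i ≤ n-1, |b_{i+1} - b_i| = n - |a_{i+1} - a_i|. -/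
theorem stmt_5 (n : ℕ) (a : ℕ → ℤ) (ha : Good n a) (hI : CondI n a)
    (b : ℕ → ℤ)
    (hb : ∀ i, b i = if Odd i then a i - ((n / 2 : ℕ) : ℤ)
                     else a i + (((n + 1) / 2 : ℕ) : ℤ)) :
    ∀ i ∈ Set.Icc 1 (n - 1), |b (i + 1) - b i| = (n : ℤ) - |a (i + 1) - a i| := by
  intro i hi
  simp only [Set.mem_Icc] at hi
  obtain ⟨hi1, hi2⟩ := hi
  have hn2 : 2 ≤ n := by omega
  have hiI : i ∈ Set.Icc 1 n := Set.mem_Icc.mpr ⟨hi1, by omega⟩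
  have hi1I : i + 1 ∈ Set.Icc 1 n := Set.mem_Icc.mpr ⟨by omega, by omega⟩
  obtain ⟨hperm, _⟩ := ha
  have hai := hperm.2 i hiI
  have hai1 := hperm.2 (i + 1) hi1I
  simp only [Set.mem_Icc] at hai hai1
  have hsum : ((n / 2 : ℕ) : ℤ) + (((n + 1) / 2 : ℕ) : ℤ) = (n : ℤ) := by
    rw [← Nat.cast_add, Nat.cast_inj]
    omega
  rcases Nat.even_or_odd i with he | ho
  · have ho1 : Odd (i + 1) := Even.add_one he
    have h1 := hI.1 (i + 1) hi1I ho1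
    have h2 := hI.2 i hiI he
    rw [hb, hb, if_pos ho1, if_neg (Nat.not_odd_iff_even.mpr he)]
    rw [abs_of_nonpos (by omega), abs_of_pos (by omega)]
    omega
  · have he1 : Even (i + 1) := Odd.add_one ho
    have h1 := hI.1 i hiI ho
    have h2 := hI.2 (i + 1) hi1I he1
    rw [hb, hb, if_pos ho, if_neg (Nat.not_odd_iff_even.mpr he1)]
    rw [abs_of_pos (by omega), abs_of_neg (by omega)]
    omega
end

section
/- Let n ≥ 2. Then n ≡ 0 or 1 (mod 4) if and only if for every permutation (a_1,...,a_n) of {1,...,n} whose n-1 consecutive absolute differences |a_2-a_1|,...,|a_n-a_{n-1}| are pairwise distinct, a_1 ≡ a_n (mod 2). -/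
theorem stmt_7 (n : ℕ) (hn : 2 ≤ n) :
    (n % 4 = 0 ∨ n % 4 = 1) ↔
      ∀ a : ℕ → ℤ, IsPermOn n a → DistinctDiffs n a → Int.ModEq 2 (a 1) (a n) := by
  constructor
  · rintro hmod a ⟨hinj, hmem⟩ hdd
    set m := n - 1 with hm
    set f : ℕ → ℕ := fun i => (a (i+1) - a i).natAbs with hf
    have hfmem : ∀ i ∈ Finset.Icc 1 m, f i ∈ Finset.Icc 1 m := by
      intro i hi
      simp only [Finset.mem_Icc] at hi ⊢
      have h1 := hmem i (by simp only [Set.mem_Icc]; omega)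
      have h2 := hmem (i+1) (by simp only [Set.mem_Icc]; omega)
      simp only [Set.mem_Icc] at h1 h2
      have hne : a (i+1) ≠ a i := by
        intro h
        have := hinj (Set.mem_Icc.mpr (by omega)) (Set.mem_Icc.mpr (by omega)) h
        omega
      simp only [hf]
      omega
    have hfinj : Set.InjOn f (Finset.Icc 1 m) := by
      intro i hi j hj h
      simp only [Finset.coe_Icc, Set.mem_Icc] at hi hj
      apply hdd i (Set.mem_Icc.mpr (by omega)) j (Set.mem_Icc.mpr (by omega))
      rw [Int.abs_eq_natAbs, Int.abs_eq_natAbs]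
      exact_mod_cast congrArg (Nat.cast : ℕ → ℤ) h
    have himg : Finset.image f (Finset.Icc 1 m) = Finset.Icc 1 m := by
      apply Finset.eq_of_subset_of_card_le
      · intro x hx
        rcases Finset.mem_image.mp hx with ⟨i, hi, rfl⟩
        exact hfmem i hi
      · rw [Finset.card_image_of_injOn hfinj]
    have hsum : ∑ i ∈ Finset.Icc 1 m, f i = ∑ k ∈ Finset.Icc 1 m, k := by
      conv_rhs => rw [← himg]
      rw [Finset.sum_image (fun i hi j hj h => hfinj hi hj h)]
    have hgauss : (∑ k ∈ Finset.Icc 1 m, k) * 2 = n * (n - 1) := by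
      have h0 : ∑ k ∈ Finset.Icc 1 m, k = ∑ k ∈ Finset.range (m+1), k := by
        rw [Finset.sum_range_succ']
        rw [Finset.range_eq_Ico, ← Finset.Ico_add_one_right_eq_Icc, Finset.sum_Ico_eq_sum_range]
        simp [add_comm]
      rw [h0, Finset.sum_range_id_mul_two]
      congr 1 <;> omega
    have heven : 2 ∣ (∑ k ∈ Finset.Icc 1 m, k) := by
      rcases hmod with h | h
      · obtain ⟨q, hq⟩ : 4 ∣ n := by omega
        have h2 : n * (n - 1) = 4 * (q * (n - 1)) := by rw [hq]; ring
        have h3 := hgauss.trans h2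
        omega
      · obtain ⟨q, hq⟩ : 4 ∣ (n - 1) := by omega
        have h2 : n * (n - 1) = 4 * (n * q) := by rw [hq]; ring
        have h3 := hgauss.trans h2
        omega
    have htel : ∑ i ∈ Finset.Icc 1 m, (a (i+1) - a i) = a n - a 1 := by
      rw [← Finset.Ico_add_one_right_eq_Icc, Finset.sum_Ico_eq_sum_range]
      have h1 : ∀ i, a (1 + i + 1) - a (1 + i) = (fun k => a (k+1)) (i+1) - (fun k => a (k+1)) i := by
        intro i; simp only []; congr 2 <;> omega
      calc ∑ i ∈ Finset.range (m + 1 - 1), (a (1 + i + 1) - a (1 + i))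
          = ∑ i ∈ Finset.range m, ((fun k => a (k+1)) (i+1) - (fun k => a (k+1)) i) := by
            apply Finset.sum_congr (by norm_num)
            intro i _; exact h1 i
        _ = a (m + 1) - a 1 := Finset.sum_range_sub (fun k => a (k+1)) m
        _ = a n - a 1 := by
              have hmn : m + 1 = n := by omega
              rw [hmn]
    have key : (2:ℤ) ∣ ∑ i ∈ Finset.Icc 1 m, ((a (i+1) - a i) - |a (i+1) - a i|) := by
      apply Finset.dvd_sum
      intro i _
      rcases abs_cases (a (i+1) - a i) with ⟨h, _⟩ | ⟨h, _⟩
      · rw [h]; simp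
      · rw [h]; exact ⟨a (i+1) - a i, by ring⟩
    rw [Finset.sum_sub_distrib, htel] at key
    have habs : ∑ i ∈ Finset.Icc 1 m, |a (i+1) - a i| = ((∑ k ∈ Finset.Icc 1 m, k : ℕ) : ℤ) := by
      rw [← hsum, Nat.cast_sum]
      exact Finset.sum_congr rfl (fun i _ => Int.abs_eq_natAbs _)
    rw [habs] at key
    have hc : (2:ℤ) ∣ ((∑ k ∈ Finset.Icc 1 m, k : ℕ) : ℤ) := by exact_mod_cast heven
    rw [Int.modEq_iff_dvd]
    omega
  · intro H
    by_contra hmod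
    push_neg at hmod
    obtain ⟨hm0, hm1⟩ := hmod
    set a : ℕ → ℤ := fun i => if i % 2 = 1 then ((i+1)/2 : ℕ) else ((n + 1 - i/2 : ℕ) : ℤ) with ha
    have hperm : IsPermOn n a := by
      constructor
      · intro i hi j hj hij
        simp only [Set.mem_Icc] at hi hj
        simp only [ha] at hij
        split_ifs at hij <;> omega
      · intro i hi
        simp only [Set.mem_Icc] at hi
        simp only [ha, Set.mem_Icc]
        split_ifs <;> constructor <;> omega
    have hdiff : ∀ i ∈ Set.Icc 1 (n-1), |a (i+1) - a i| = (n : ℤ) - i := by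
      intro i hi
      simp only [Set.mem_Icc] at hi
      by_cases h : i % 2 = 1
      · simp only [ha]
        rw [if_pos h, if_neg (by omega : ¬((i+1) % 2 = 1))]
        have hv : ((n + 1 - (i+1)/2 : ℕ) : ℤ) - ((i+1)/2 : ℕ) = (n : ℤ) - i := by omega
        rw [hv, abs_of_nonneg (by omega)]
      · simp only [ha]
        rw [if_neg h, if_pos (by omega : (i+1) % 2 = 1)]
        have hv : (((i+1+1)/2 : ℕ) : ℤ) - ((n + 1 - i/2 : ℕ) : ℤ) = (i : ℤ) - n := by omega
        rw [hv, abs_of_nonpos (by omega)]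
        omega
    have hdd : DistinctDiffs n a := by
      intro i hi j hj h
      rw [hdiff i hi, hdiff j hj] at h
      omega
    have := H a hperm hdd
    rw [Int.modEq_iff_dvd] at this
    simp only [ha] at this
    split_ifs at this <;> omega
end

section
/- Let A be a set of n distinct reals with additive energy E(A,A) = c·n² for some constant c < 5/2. Then for all sufficiently large n there exists a cyclic arrangement (a_1,...,a_n) of A such that the n cyclic absolute differences |a_2-a_1|, ..., |a_n-a_{n-1}|, |a_1-a_n| are pairwise distinct. -/
/-- The additive energy of a finite set of reals: the number of quadruples
`(a, b, c, d)` with `a + b = c + d`. -/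
noncomputable def addEnergy (A : Finset ℝ) : ℕ :=
  (((A ×ˢ A) ×ˢ (A ×ˢ A)).filter
    (fun p => p.1.1 + p.1.2 = p.2.1 + p.2.2)).card

open Finset Function Nat

noncomputable def nontrivEnergy (A : Finset ℝ) : ℕ :=
  (((A ×ˢ A) ×ˢ (A ×ˢ A)).filter
    (fun p => p.1.1 + p.1.2 = p.2.1 + p.2.2 ∧
      ¬(p.1.1 = p.2.1 ∨ p.1.1 = p.2.2))).card

lemma fib_bound {n : ℕ} {β : Type} [Fintype β] [DecidableEq β]
    (hβ : Fintype.card β = n) (s : Finset (Fin n)) (f : Fin n → β) :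
    (univ.filter (fun σ : Fin n ≃ β => ∀ p ∈ s, σ p = f p)).card ≤ (n - s.card)! := by
  classical
  set F := univ.filter (fun σ : Fin n ≃ β => ∀ p ∈ s, σ p = f p) with hF
  rcases F.eq_empty_or_nonempty with h | h
  · rw [h]; simpa using Nat.zero_le _
  obtain ⟨σ₀, hσ₀⟩ := h
  have hσ₀' : ∀ p ∈ s, σ₀ p = f p := (mem_filter.mp hσ₀).2
  set t := s.image f with ht
  have htcard : t.card = s.card := by
    rw [ht]
    apply Finset.card_image_of_injOn
    intro x hx y hy hxy
    apply σ₀.injective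
    rw [hσ₀' x hx, hσ₀' y hy, hxy]
  have hsc : Fintype.card {x : Fin n // x ∈ sᶜ} = n - s.card := by
    rw [Fintype.card_coe, card_compl, Fintype.card_fin]
  have htc : Fintype.card {y : β // y ∈ tᶜ} = n - s.card := by
    rw [Fintype.card_coe, card_compl, hβ, htcard]
  have hne : Nonempty ({x : Fin n // x ∈ sᶜ} ↪ {y : β // y ∈ tᶜ}) :=
    Function.Embedding.nonempty_of_card_le (by rw [hsc, htc])
  have key : ∀ σ ∈ F, ∀ x : Fin n, x ∈ sᶜ → σ x ∈ tᶜ := by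
    intro σ hσ x hx
    simp only [mem_compl] at hx ⊢
    intro hmem
    rw [ht, mem_image] at hmem
    obtain ⟨p, hp, hpx⟩ := hmem
    have hxp : σ p = σ x := by rw [(mem_filter.mp hσ).2 p hp, hpx]
    exact hx (σ.injective hxp ▸ hp)
  set Φ : (Fin n ≃ β) → ({x : Fin n // x ∈ sᶜ} ↪ {y : β // y ∈ tᶜ}) := fun σ =>
    if hσ : σ ∈ F then
      ⟨fun x => ⟨σ x.1, key σ hσ x.1 x.2⟩, by
        intro a b hab
        exact Subtype.ext (σ.injective (congrArg Subtype.val hab))⟩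
    else hne.some with hΦ
  have hcard : F.card ≤ (univ : Finset ({x : Fin n // x ∈ sᶜ} ↪ {y : β // y ∈ tᶜ})).card := by
    apply Finset.card_le_card_of_injOn Φ (fun a _ => mem_univ _)
    intro σ hσ τ hτ hστ
    have hσF : σ ∈ F := hσ
    have hτF : τ ∈ F := hτ
    rw [hΦ] at hστ
    simp only [dif_pos hσF, dif_pos hτF] at hστ
    apply Equiv.ext
    intro x
    by_cases hx : x ∈ s
    · rw [(mem_filter.mp hσF).2 x hx, (mem_filter.mp hτF).2 x hx]
    · have := DFunLike.congr_fun hστ ⟨x, mem_compl.mpr hx⟩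
      exact congrArg Subtype.val this
  calc F.card ≤ _ := hcard
    _ = (n - s.card)! := by
        rw [Finset.card_univ, Fintype.card_embedding_eq, hsc, htc, Nat.descFactorial_self]

lemma pair_bound4 {n : ℕ} {β : Type} [Fintype β] [DecidableEq β]
    (hβ : Fintype.card β = n) (g : β → ℝ) (p1 p2 p3 p4 : Fin n)
    (h12 : p1 ≠ p2) (h13 : p1 ≠ p3) (h14 : p1 ≠ p4)
    (h23 : p2 ≠ p3) (h24 : p2 ≠ p4) (h34 : p3 ≠ p4) :
    (univ.filter (fun σ : Fin n ≃ β =>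
        |g (σ p2) - g (σ p1)| = |g (σ p4) - g (σ p3)|)).card
      ≤ (univ.filter (fun t : β × β × β × β =>
          (t.1 ≠ t.2.1 ∧ t.1 ≠ t.2.2.1 ∧ t.1 ≠ t.2.2.2 ∧ t.2.1 ≠ t.2.2.1 ∧
            t.2.1 ≠ t.2.2.2 ∧ t.2.2.1 ≠ t.2.2.2)
          ∧ |g t.2.1 - g t.1| = |g t.2.2.2 - g t.2.2.1|)).card * (n - 4)! := by
  classical
  set Q := (univ.filter (fun t : β × β × β × β =>
          (t.1 ≠ t.2.1 ∧ t.1 ≠ t.2.2.1 ∧ t.1 ≠ t.2.2.2 ∧ t.2.1 ≠ t.2.2.1 ∧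
            t.2.1 ≠ t.2.2.2 ∧ t.2.2.1 ≠ t.2.2.2)
          ∧ |g t.2.1 - g t.1| = |g t.2.2.2 - g t.2.2.1|)) with hQ
  have hsub : (univ.filter (fun σ : Fin n ≃ β =>
        |g (σ p2) - g (σ p1)| = |g (σ p4) - g (σ p3)|))
      ⊆ Q.biUnion (fun t => univ.filter (fun σ : Fin n ≃ β =>
          σ p1 = t.1 ∧ σ p2 = t.2.1 ∧ σ p3 = t.2.2.1 ∧ σ p4 = t.2.2.2)) := by
    intro σ hσ
    rw [mem_filter] at hσ
    rw [mem_biUnion]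
    refine ⟨(σ p1, σ p2, σ p3, σ p4), ?_, ?_⟩
    · rw [hQ, mem_filter]
      refine ⟨mem_univ _, ⟨?_, ?_, ?_, ?_, ?_, ?_⟩, hσ.2⟩ <;>
        simp only [ne_eq, EmbeddingLike.apply_eq_iff_eq] <;> assumption
    · simp
  calc _ ≤ (Q.biUnion (fun t => univ.filter (fun σ : Fin n ≃ β =>
          σ p1 = t.1 ∧ σ p2 = t.2.1 ∧ σ p3 = t.2.2.1 ∧ σ p4 = t.2.2.2))).card :=
        Finset.card_le_card hsub
    _ ≤ ∑ t ∈ Q, (univ.filter (fun σ : Fin n ≃ β =>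
          σ p1 = t.1 ∧ σ p2 = t.2.1 ∧ σ p3 = t.2.2.1 ∧ σ p4 = t.2.2.2)).card :=
        Finset.card_biUnion_le
    _ ≤ ∑ _t ∈ Q, (n - 4)! := by
        apply Finset.sum_le_sum
        intro t _
        have hss : (univ.filter (fun σ : Fin n ≃ β =>
            σ p1 = t.1 ∧ σ p2 = t.2.1 ∧ σ p3 = t.2.2.1 ∧ σ p4 = t.2.2.2))
            ⊆ (univ.filter (fun σ : Fin n ≃ β => ∀ p ∈ ({p1, p2, p3, p4} : Finset (Fin n)),
                σ p = (fun p => if p = p1 then t.1 else if p = p2 then t.2.1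
                  else if p = p3 then t.2.2.1 else t.2.2.2) p)) := by
          intro σ hσ
          rw [mem_filter] at hσ ⊢
          obtain ⟨-, e1, e2, e3, e4⟩ := hσ
          refine ⟨mem_univ _, ?_⟩
          intro p hp
          simp only [mem_insert, mem_singleton] at hp
          rcases hp with rfl | rfl | rfl | rfl <;>
            simp [Ne.symm h12, Ne.symm h13, Ne.symm h14, Ne.symm h23, Ne.symm h24,
              Ne.symm h34, e1, e2, e3, e4]
        have hc4 : ({p1, p2, p3, p4} : Finset (Fin n)).card = 4 := by
          rw [card_insert_of_notMem (by simp [h12, h13, h14]),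
            card_insert_of_notMem (by simp [h23, h24]),
            card_insert_of_notMem (by simp [h34]), card_singleton]
        calc _ ≤ _ := Finset.card_le_card hss
          _ ≤ (n - ({p1, p2, p3, p4} : Finset (Fin n)).card)! := fib_bound hβ _ _
          _ = (n - 4)! := by rw [hc4]
    _ = Q.card * (n - 4)! := by rw [Finset.sum_const, smul_eq_mul]

lemma pair_bound3 {n : ℕ} {β : Type} [Fintype β] [DecidableEq β]
    (hβ : Fintype.card β = n) (g : β → ℝ) (p1 p2 p3 : Fin n)
    (h12 : p1 ≠ p2) (h13 : p1 ≠ p3) (h23 : p2 ≠ p3) :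
    (univ.filter (fun σ : Fin n ≃ β =>
        |g (σ p2) - g (σ p1)| = |g (σ p3) - g (σ p2)|)).card
      ≤ (univ.filter (fun t : β × β × β =>
          (t.1 ≠ t.2.1 ∧ t.1 ≠ t.2.2 ∧ t.2.1 ≠ t.2.2)
          ∧ |g t.2.1 - g t.1| = |g t.2.2 - g t.2.1|)).card * (n - 3)! := by
  classical
  set Q := (univ.filter (fun t : β × β × β =>
          (t.1 ≠ t.2.1 ∧ t.1 ≠ t.2.2 ∧ t.2.1 ≠ t.2.2)
          ∧ |g t.2.1 - g t.1| = |g t.2.2 - g t.2.1|)) with hQ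
  have hsub : (univ.filter (fun σ : Fin n ≃ β =>
        |g (σ p2) - g (σ p1)| = |g (σ p3) - g (σ p2)|))
      ⊆ Q.biUnion (fun t => univ.filter (fun σ : Fin n ≃ β =>
          σ p1 = t.1 ∧ σ p2 = t.2.1 ∧ σ p3 = t.2.2)) := by
    intro σ hσ
    rw [mem_filter] at hσ
    rw [mem_biUnion]
    refine ⟨(σ p1, σ p2, σ p3), ?_, ?_⟩
    · rw [hQ, mem_filter]
      refine ⟨mem_univ _, ⟨?_, ?_, ?_⟩, hσ.2⟩ <;>
        simp only [ne_eq, EmbeddingLike.apply_eq_iff_eq] <;> assumption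
    · simp
  calc _ ≤ (Q.biUnion (fun t => univ.filter (fun σ : Fin n ≃ β =>
          σ p1 = t.1 ∧ σ p2 = t.2.1 ∧ σ p3 = t.2.2))).card :=
        Finset.card_le_card hsub
    _ ≤ ∑ t ∈ Q, (univ.filter (fun σ : Fin n ≃ β =>
          σ p1 = t.1 ∧ σ p2 = t.2.1 ∧ σ p3 = t.2.2)).card :=
        Finset.card_biUnion_le
    _ ≤ ∑ _t ∈ Q, (n - 3)! := by
        apply Finset.sum_le_sum
        intro t _
        have hss : (univ.filter (fun σ : Fin n ≃ β =>
            σ p1 = t.1 ∧ σ p2 = t.2.1 ∧ σ p3 = t.2.2))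
            ⊆ (univ.filter (fun σ : Fin n ≃ β => ∀ p ∈ ({p1, p2, p3} : Finset (Fin n)),
                σ p = (fun p => if p = p1 then t.1 else if p = p2 then t.2.1
                  else t.2.2) p)) := by
          intro σ hσ
          rw [mem_filter] at hσ ⊢
          obtain ⟨-, e1, e2, e3⟩ := hσ
          refine ⟨mem_univ _, ?_⟩
          intro p hp
          simp only [mem_insert, mem_singleton] at hp
          rcases hp with rfl | rfl | rfl <;>
            simp [Ne.symm h12, Ne.symm h13, Ne.symm h23, e1, e2, e3]
        have hc3 : ({p1, p2, p3} : Finset (Fin n)).card = 3 := by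
          rw [card_insert_of_notMem (by simp [h12, h13]),
            card_insert_of_notMem (by simp [h23]), card_singleton]
        calc _ ≤ _ := Finset.card_le_card hss
          _ ≤ (n - ({p1, p2, p3} : Finset (Fin n)).card)! := fib_bound hβ _ _
          _ = (n - 3)! := by rw [hc3]
    _ = Q.card * (n - 3)! := by rw [Finset.sum_const, smul_eq_mul]

lemma energy_split (A : Finset ℝ) :
    _root_.addEnergy A + A.card = nontrivEnergy A + 2 * A.card ^ 2 := by
  classical
  set s := (A ×ˢ A) ×ˢ (A ×ˢ A) with hs
  set P : (ℝ × ℝ) × (ℝ × ℝ) → Prop := fun p => p.1.1 + p.1.2 = p.2.1 + p.2.2 with hP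
  have hsplit : _root_.addEnergy A =
      (s.filter (fun p => P p ∧ (p.1.1 = p.2.1 ∨ p.1.1 = p.2.2))).card + nontrivEnergy A := by
    rw [_root_.addEnergy, nontrivEnergy]
    rw [← Finset.filter_filter, ← Finset.filter_filter,
      Finset.card_filter_add_card_filter_not]
  have hor : s.filter (fun p => P p ∧ (p.1.1 = p.2.1 ∨ p.1.1 = p.2.2)) =
      s.filter (fun p => P p ∧ p.1.1 = p.2.1) ∪ s.filter (fun p => P p ∧ p.1.1 = p.2.2) := by
    rw [← Finset.filter_or]
    apply Finset.filter_congr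
    intro p _
    tauto
  have hU1 : (s.filter (fun p => P p ∧ p.1.1 = p.2.1)) = (A ×ˢ A).image (fun q => (q, q)) := by
    ext p
    simp only [mem_filter, mem_image, hs, hP, mem_product]
    constructor
    · rintro ⟨⟨h1, _⟩, hsum, heq⟩
      refine ⟨p.1, ⟨h1.1, h1.2⟩, ?_⟩
      have h2 : p.2 = p.1 := by
        have h2 : p.1.2 = p.2.2 := by linarith
        exact Prod.ext heq.symm h2.symm
      exact Prod.ext rfl h2.symm
    · rintro ⟨q, ⟨hq1, hq2⟩, rfl⟩
      exact ⟨⟨⟨hq1, hq2⟩, ⟨hq1, hq2⟩⟩, rfl, rfl⟩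
  have hU2 : (s.filter (fun p => P p ∧ p.1.1 = p.2.2)) =
      (A ×ˢ A).image (fun q => (q, (q.2, q.1))) := by
    ext p
    simp only [mem_filter, mem_image, hs, hP, mem_product]
    constructor
    · rintro ⟨⟨h1, _⟩, hsum, heq⟩
      refine ⟨p.1, ⟨h1.1, h1.2⟩, ?_⟩
      have h2 : p.1.2 = p.2.1 := by linarith
      have h3 : p.2 = (p.1.2, p.1.1) := Prod.ext h2.symm heq.symm
      exact Prod.ext rfl h3.symm
    · rintro ⟨q, ⟨hq1, hq2⟩, rfl⟩
      exact ⟨⟨⟨hq1, hq2⟩, ⟨hq2, hq1⟩⟩, by ring, rfl⟩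
  have hI : (s.filter (fun p => P p ∧ p.1.1 = p.2.1)) ∩ (s.filter (fun p => P p ∧ p.1.1 = p.2.2))
      = A.image (fun x => ((x, x), (x, x))) := by
    ext p
    simp only [mem_inter, mem_filter, mem_image, hs, hP, mem_product]
    constructor
    · rintro ⟨⟨⟨h1, _⟩, hsum, heq1⟩, _, _, heq2⟩
      refine ⟨p.1.1, h1.1, ?_⟩
      have hy : p.1.2 = p.1.1 := by linarith
      exact Prod.ext (Prod.ext rfl hy.symm) (Prod.ext heq1 heq2)
    · rintro ⟨x, hx, rfl⟩
      exact ⟨⟨⟨⟨hx, hx⟩, hx, hx⟩, rfl, rfl⟩, ⟨⟨hx, hx⟩, hx, hx⟩, rfl, rfl⟩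
  have c1 : (s.filter (fun p => P p ∧ p.1.1 = p.2.1)).card = A.card ^ 2 := by
    rw [hU1, Finset.card_image_of_injective _ (fun a b h => congrArg Prod.fst h),
      Finset.card_product]
    ring
  have c2 : (s.filter (fun p => P p ∧ p.1.1 = p.2.2)).card = A.card ^ 2 := by
    rw [hU2, Finset.card_image_of_injective _ (fun a b h => congrArg Prod.fst h),
      Finset.card_product]
    ring
  have cI : ((s.filter (fun p => P p ∧ p.1.1 = p.2.1)) ∩
      (s.filter (fun p => P p ∧ p.1.1 = p.2.2))).card = A.card := by
    rw [hI]
    exact Finset.card_image_of_injective _ (fun a b h => congrArg (fun p => p.1.1) h)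
  have hcu := Finset.card_union_add_card_inter
    (s.filter (fun p => P p ∧ p.1.1 = p.2.1)) (s.filter (fun p => P p ∧ p.1.1 = p.2.2))
  rw [c1, c2, cI, ← hor] at hcu
  omega

lemma q4_le_nontriv (A : Finset ℝ) (g : {x // x ∈ A} → ℝ) (hg : ∀ x, g x = x) :
    (univ.filter (fun t : {x // x ∈ A} × {x // x ∈ A} × {x // x ∈ A} × {x // x ∈ A} =>
        (t.1 ≠ t.2.1 ∧ t.1 ≠ t.2.2.1 ∧ t.1 ≠ t.2.2.2 ∧ t.2.1 ≠ t.2.2.1 ∧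
          t.2.1 ≠ t.2.2.2 ∧ t.2.2.1 ≠ t.2.2.2)
        ∧ |g t.2.1 - g t.1| = |g t.2.2.2 - g t.2.2.1|)).card
      ≤ 2 * nontrivEnergy A := by
  classical
  set Q := (univ.filter (fun t : {x // x ∈ A} × {x // x ∈ A} × {x // x ∈ A} × {x // x ∈ A} =>
        (t.1 ≠ t.2.1 ∧ t.1 ≠ t.2.2.1 ∧ t.1 ≠ t.2.2.2 ∧ t.2.1 ≠ t.2.2.1 ∧
          t.2.1 ≠ t.2.2.2 ∧ t.2.2.1 ≠ t.2.2.2)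
        ∧ |g t.2.1 - g t.1| = |g t.2.2.2 - g t.2.2.1|)) with hQdef
  set NT := (((A ×ˢ A) ×ˢ (A ×ˢ A)).filter
    (fun p => p.1.1 + p.1.2 = p.2.1 + p.2.2 ∧
      ¬(p.1.1 = p.2.1 ∨ p.1.1 = p.2.2))) with hNT
  have hsplit := Finset.card_filter_add_card_filter_not
    (s := Q) (p := fun t : {x // x ∈ A} × {x // x ∈ A} × {x // x ∈ A} × {x // x ∈ A} => (t.2.1 : ℝ) - t.1 = (t.2.2.2 : ℝ) - t.2.2.1)
  have h1 : (Q.filter (fun t : {x // x ∈ A} × {x // x ∈ A} × {x // x ∈ A} × {x // x ∈ A} =>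
      (t.2.1 : ℝ) - t.1 = (t.2.2.2 : ℝ) - t.2.2.1)).card ≤ NT.card := by
    apply Finset.card_le_card_of_injOn
      (fun t => (((t.2.1 : ℝ), (t.2.2.1 : ℝ)), ((t.2.2.2 : ℝ), (t.1 : ℝ))))
    · rintro ⟨a, b, c, d⟩ ht
      simp only [Finset.mem_coe, mem_filter, hQdef, mem_univ, true_and] at ht
      obtain ⟨⟨⟨hab, hac, had, hbc, hbd, hcd⟩, habs⟩, heq⟩ := ht
      rw [hNT, Finset.mem_coe, mem_filter]
      refine ⟨?_, by first | linarith | (dsimp; linarith), ?_⟩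
      · simp [mem_product, a.2, b.2, c.2, d.2]
      · dsimp only
        push_neg
        constructor
        · exact fun h => hbd (Subtype.ext h)
        · exact fun h => hab (Subtype.ext h).symm
    · rintro ⟨a, b, c, d⟩ _ ⟨a', b', c', d'⟩ _ h
      simp only [Prod.mk.injEq] at h
      obtain ⟨⟨h1, h2⟩, h3, h4⟩ := h
      simp only [Prod.mk.injEq]
      exact ⟨Subtype.ext h4, Subtype.ext h1, Subtype.ext h2, Subtype.ext h3⟩
  have h2 : (Q.filter (fun t : {x // x ∈ A} × {x // x ∈ A} × {x // x ∈ A} × {x // x ∈ A} =>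
      ¬((t.2.1 : ℝ) - t.1 = (t.2.2.2 : ℝ) - t.2.2.1))).card ≤ NT.card := by
    apply Finset.card_le_card_of_injOn
      (fun t => (((t.2.1 : ℝ), (t.2.2.2 : ℝ)), ((t.2.2.1 : ℝ), (t.1 : ℝ))))
    · rintro ⟨a, b, c, d⟩ ht
      simp only [Finset.mem_coe, mem_filter, hQdef, mem_univ, true_and] at ht
      obtain ⟨⟨⟨hab, hac, had, hbc, hbd, hcd⟩, habs⟩, hne⟩ := ht
      rw [hg, hg, hg, hg] at habs
      rcases abs_eq_abs.mp habs with h | h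
      · exact absurd (by first | linarith | (dsimp; linarith)) hne
      rw [hNT, Finset.mem_coe, mem_filter]
      refine ⟨?_, by first | linarith | (dsimp; linarith), ?_⟩
      · simp [mem_product, a.2, b.2, c.2, d.2]
      · dsimp only
        push_neg
        constructor
        · exact fun h => hbc (Subtype.ext h)
        · exact fun h => hab (Subtype.ext h).symm
    · rintro ⟨a, b, c, d⟩ _ ⟨a', b', c', d'⟩ _ h
      simp only [Prod.mk.injEq] at h
      obtain ⟨⟨h1, h2⟩, h3, h4⟩ := h
      simp only [Prod.mk.injEq]
      exact ⟨Subtype.ext h4, Subtype.ext h1, Subtype.ext h3, Subtype.ext h2⟩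
  calc Q.card = _ + _ := hsplit.symm
    _ ≤ NT.card + NT.card := Nat.add_le_add h1 h2
    _ = 2 * nontrivEnergy A := by rw [nontrivEnergy, ← hNT]; ring

lemma q3_le_nontriv (A : Finset ℝ) (g : {x // x ∈ A} → ℝ) (hg : ∀ x, g x = x) :
    (univ.filter (fun t : {x // x ∈ A} × {x // x ∈ A} × {x // x ∈ A} =>
        (t.1 ≠ t.2.1 ∧ t.1 ≠ t.2.2 ∧ t.2.1 ≠ t.2.2)
        ∧ |g t.2.1 - g t.1| = |g t.2.2 - g t.2.1|)).card
      ≤ nontrivEnergy A := by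
  classical
  set NT := (((A ×ˢ A) ×ˢ (A ×ˢ A)).filter
    (fun p => p.1.1 + p.1.2 = p.2.1 + p.2.2 ∧
      ¬(p.1.1 = p.2.1 ∨ p.1.1 = p.2.2))) with hNT
  rw [nontrivEnergy, ← hNT]
  apply Finset.card_le_card_of_injOn
    (fun t => (((t.1 : ℝ), (t.2.2 : ℝ)), ((t.2.1 : ℝ), (t.2.1 : ℝ))))
  · rintro ⟨a, b, c⟩ ht
    simp only [Finset.mem_coe, mem_filter, mem_univ, true_and] at ht
    obtain ⟨⟨hab, hac, hbc⟩, habs⟩ := ht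
    rw [hg, hg, hg] at habs
    have hsum : (a : ℝ) + c = b + b := by
      rcases abs_eq_abs.mp habs with h | h
      · linarith
      · exact absurd (Subtype.ext (by first | linarith | (dsimp at h ⊢; linarith))) hac
    rw [hNT, Finset.mem_coe, mem_filter]
    refine ⟨?_, by first | linarith | (dsimp; linarith), ?_⟩
    · simp [mem_product, a.2, b.2, c.2]
    · dsimp only
      push_neg
      exact ⟨fun h => hab (Subtype.ext h), fun h => hab (Subtype.ext h)⟩
  · rintro ⟨a, b, c⟩ _ ⟨a', b', c'⟩ _ h
    simp only [Prod.mk.injEq] at h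
    obtain ⟨⟨h1, h2⟩, h3, -⟩ := h
    simp only [Prod.mk.injEq]
    exact ⟨Subtype.ext h1, Subtype.ext h3, Subtype.ext h2⟩

set_option maxHeartbeats 1600000 in
theorem stmt_16 (c : ℝ) (hc : c < 5 / 2) :
    ∃ N : ℕ, ∀ n ≥ N, ∀ A : Finset ℝ, A.card = n →
      (addEnergy A : ℝ) = c * (n : ℝ) ^ 2 →
      ∃ σ : Fin n ≃ {x // x ∈ A},
        Function.Injective
          (fun i : Fin n => |(σ (finRotate n i) : ℝ) - (σ i : ℝ)|) := by
  classical
  set δ : ℝ := 5 - 2 * c with hδdef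
  have hδpos : 0 < δ := by rw [hδdef]; linarith
  refine ⟨⌈9 / δ⌉₊ + 9, ?_⟩
  intro n hn A hcard hE
  obtain ⟨m, rfl⟩ : ∃ m, n = m + 5 := ⟨n - 5, by omega⟩
  have hcardα : Fintype.card {x // x ∈ A} = m + 5 := by
    rw [Fintype.card_coe, hcard]
  -- basic `Fin` facts
  have hrot : ∀ i : Fin (m + 5), finRotate (m + 5) i = i + 1 := fun i =>
    finRotate_succ_apply i
  have hval2 : ∀ i : Fin (m + 5), (i + 1).val = if i.val + 1 < m + 5 then i.val + 1 else 0 := by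
    intro i
    have h := Fin.val_add_one i
    have hiv := i.isLt
    split_ifs at h with hL
    · have hm4 : i.val = m + 4 := by rw [hL]; simp [Fin.val_last]
      rw [if_neg (by omega), h]
    · have hm4 : i.val ≠ m + 4 := fun hh => hL (Fin.ext (by simp [Fin.val_last, hh]))
      rw [if_pos (by omega), h]
  have hne1 : ∀ i : Fin (m + 5), i + 1 ≠ i := by
    intro i h
    have hv := congrArg Fin.val h
    rw [hval2] at hv
    have := i.isLt
    split_ifs at hv <;> omega
  have hne2 : ∀ i : Fin (m + 5), i + 1 + 1 ≠ i := by
    intro i h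
    have hv := congrArg Fin.val h
    rw [hval2, hval2] at hv
    have := i.isLt
    have := (i + 1).isLt
    split_ifs at hv <;> omega
  -- the bad set
  set Bad : Finset (Fin (m + 5) ≃ {x // x ∈ A}) :=
    univ.filter (fun σ => ¬ Function.Injective
      (fun i : Fin (m + 5) => |(σ (finRotate (m + 5) i) : ℝ) - (σ i : ℝ)|)) with hBad
  set bp : Fin (m + 5) × Fin (m + 5) → Finset (Fin (m + 5) ≃ {x // x ∈ A}) :=
    fun q => univ.filter (fun σ =>
      |(σ (q.1 + 1) : ℝ) - (σ q.1 : ℝ)| =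
      |(σ (q.2 + 1) : ℝ) - (σ q.2 : ℝ)|) with hbp
  set P : Finset (Fin (m + 5) × Fin (m + 5)) :=
    (univ ×ˢ univ).filter (fun q => q.1 < q.2) with hP
  have hsubBad : Bad ⊆ P.biUnion bp := by
    intro σ hσ
    rw [hBad, mem_filter] at hσ
    rw [Function.not_injective_iff] at hσ
    obtain ⟨-, i, j, heq, hij⟩ := hσ
    simp only [hrot] at heq
    rw [mem_biUnion]
    rcases lt_or_gt_of_ne hij with h | h
    · refine ⟨(i, j), by simp [hP, h], ?_⟩
      rw [hbp, mem_filter]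
      exact ⟨mem_univ _, heq⟩
    · refine ⟨(j, i), by simp [hP, h], ?_⟩
      rw [hbp, mem_filter]
      exact ⟨mem_univ _, heq.symm⟩
  set adj : Fin (m + 5) × Fin (m + 5) → Prop :=
    fun q => q.2 = q.1 + 1 ∨ q.1 = q.2 + 1 with hadj
  set Q3c := (univ.filter (fun t : {x // x ∈ A} × {x // x ∈ A} × {x // x ∈ A} =>
        (t.1 ≠ t.2.1 ∧ t.1 ≠ t.2.2 ∧ t.2.1 ≠ t.2.2)
        ∧ |((t.2.1 : ℝ)) - ((t.1 : ℝ))| = |((t.2.2 : ℝ)) - ((t.2.1 : ℝ))|)).card with hQ3c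
  set Q4c := (univ.filter
      (fun t : {x // x ∈ A} × {x // x ∈ A} × {x // x ∈ A} × {x // x ∈ A} =>
        (t.1 ≠ t.2.1 ∧ t.1 ≠ t.2.2.1 ∧ t.1 ≠ t.2.2.2 ∧ t.2.1 ≠ t.2.2.1 ∧
          t.2.1 ≠ t.2.2.2 ∧ t.2.2.1 ≠ t.2.2.2)
        ∧ |((t.2.1 : ℝ)) - ((t.1 : ℝ))| =
          |((t.2.2.2 : ℝ)) - ((t.2.2.1 : ℝ))|)).card with hQ4c
  have hadjbound : ∀ q ∈ P.filter adj, (bp q).card ≤ Q3c * (m + 2)! := by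
    intro q hq
    rw [mem_filter] at hq
    have hsub3 : m + 5 - 3 = m + 2 := by omega
    rcases hq.2 with hA | hB
    · have hform : bp q = univ.filter (fun σ : Fin (m + 5) ≃ {x // x ∈ A} =>
          |((σ (q.1 + 1) : ℝ)) - ((σ q.1 : ℝ))| =
          |((σ (q.1 + 1 + 1) : ℝ)) - ((σ (q.1 + 1) : ℝ))|) := by
        rw [hbp]
        apply Finset.filter_congr
        intro σ _
        rw [hA]
      rw [hform]
      have := pair_bound3 hcardα (fun x : {x // x ∈ A} => (x : ℝ))
        q.1 (q.1 + 1) (q.1 + 1 + 1)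
        (fun h => hne1 q.1 h.symm) (fun h => hne2 q.1 h.symm)
        (fun h => hne1 (q.1 + 1) h.symm)
      rw [hsub3] at this
      exact this
    · have hform : bp q = univ.filter (fun σ : Fin (m + 5) ≃ {x // x ∈ A} =>
          |((σ (q.2 + 1) : ℝ)) - ((σ q.2 : ℝ))| =
          |((σ (q.2 + 1 + 1) : ℝ)) - ((σ (q.2 + 1) : ℝ))|) := by
        rw [hbp]
        apply Finset.filter_congr
        intro σ _
        rw [hB]
        exact eq_comm
      rw [hform]
      have := pair_bound3 hcardα (fun x : {x // x ∈ A} => (x : ℝ))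
        q.2 (q.2 + 1) (q.2 + 1 + 1)
        (fun h => hne1 q.2 h.symm) (fun h => hne2 q.2 h.symm)
        (fun h => hne1 (q.2 + 1) h.symm)
      rw [hsub3] at this
      exact this
  have hadjcard : (P.filter adj).card ≤ m + 6 := by
    have hsub : P.filter adj ⊆
        (univ.image (fun i : Fin (m + 5) => (i, i + 1))) ∪
          {((0 : Fin (m + 5)), Fin.last (m + 4))} := by
      intro q hq
      rw [mem_filter, hP, mem_filter] at hq
      obtain ⟨⟨-, hlt⟩, hadjq⟩ := hq
      rw [mem_union]
      rcases hadjq with hA | hB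
      · left
        rw [mem_image]
        exact ⟨q.1, mem_univ _, Prod.ext rfl hA.symm⟩
      · right
        rw [mem_singleton]
        have hv := congrArg Fin.val hB
        rw [hval2] at hv
        have hlt' : q.1.val < q.2.val := hlt
        have h2 := q.2.isLt
        have h1 : q.1.val = 0 ∧ q.2.val = m + 4 := by
          split_ifs at hv <;> omega
        have e1 : q.1 = 0 := Fin.ext (by simp [h1.1])
        have e2 : q.2 = Fin.last (m + 4) := Fin.ext (by simp [Fin.val_last, h1.2])
        exact Prod.ext e1 e2
    have himg : (univ.image (fun i : Fin (m + 5) => (i, i + 1))).card ≤ m + 5 := by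
      have h := Finset.card_image_le
        (s := (univ : Finset (Fin (m + 5)))) (f := fun i => (i, i + 1))
      rwa [Finset.card_univ, Fintype.card_fin] at h
    calc (P.filter adj).card ≤ _ := Finset.card_le_card hsub
      _ ≤ (univ.image (fun i : Fin (m + 5) => (i, i + 1))).card +
          ({((0 : Fin (m + 5)), Fin.last (m + 4))} : Finset _).card :=
            Finset.card_union_le _ _
      _ ≤ (m + 5) + 1 := by
            rw [Finset.card_singleton]
            omega
  have hdisbound : ∀ q ∈ P.filter (fun q => ¬ adj q),
      (bp q).card ≤ Q4c * (m + 1)! := by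
    intro q hq
    rw [mem_filter, hP, mem_filter] at hq
    obtain ⟨⟨-, hlt⟩, hnadj⟩ := hq
    have hn1 : q.2 ≠ q.1 + 1 := fun h => hnadj (Or.inl h)
    have hn2 : q.1 ≠ q.2 + 1 := fun h => hnadj (Or.inr h)
    rw [hbp]
    have hsub4 : m + 5 - 4 = m + 1 := by omega
    have := pair_bound4 hcardα (fun x : {x // x ∈ A} => (x : ℝ))
      q.1 (q.1 + 1) q.2 (q.2 + 1)
      (fun h => hne1 q.1 h.symm) hlt.ne (fun h => hn2 h)
      (fun h => hn1 h.symm) (fun h => hlt.ne (add_right_cancel h))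
      (fun h => hne1 q.2 h.symm)
    rw [hsub4] at this
    exact this
  have hdiscard : 2 * (P.filter (fun q => ¬ adj q)).card ≤ (m + 5) * (m + 5) - (m + 5) := by
    have hPsub : P ⊆ (univ : Finset (Fin (m + 5))).offDiag := by
      intro q hq
      rw [hP, mem_filter] at hq
      rw [Finset.mem_offDiag]
      exact ⟨mem_univ _, mem_univ _, hq.2.ne⟩
    have hswapsub : P.image Prod.swap ⊆ (univ : Finset (Fin (m + 5))).offDiag := by
      intro q hq
      rw [mem_image] at hq
      obtain ⟨r, hr, rfl⟩ := hq
      rw [hP, mem_filter] at hr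
      rw [Finset.mem_offDiag]
      exact ⟨mem_univ _, mem_univ _, hr.2.ne'⟩
    have hdisj : Disjoint P (P.image Prod.swap) := by
      rw [Finset.disjoint_left]
      intro q hq hq'
      rw [hP, mem_filter] at hq
      rw [mem_image] at hq'
      obtain ⟨r, hr, hrq⟩ := hq'
      rw [hP, mem_filter] at hr
      have h1 : r.2 = q.1 := by rw [← hrq]; rfl
      have h2 : r.1 = q.2 := by rw [← hrq]; rfl
      have : r.2 < r.1 := by rw [h1, h2]; exact hq.2
      exact absurd hr.2 (not_lt.mpr this.le)
    have hcard2 : P.card + P.card ≤ ((univ : Finset (Fin (m + 5))).offDiag).card := by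
      have h := Finset.card_le_card (Finset.union_subset hPsub hswapsub)
      rwa [Finset.card_union_of_disjoint hdisj,
        Finset.card_image_of_injective _ Prod.swap_injective] at h
    have hoff : ((univ : Finset (Fin (m + 5))).offDiag).card
        = (m + 5) * (m + 5) - (m + 5) := by
      rw [Finset.offDiag_card, Finset.card_univ, Fintype.card_fin]
    have hPc : (P.filter (fun q => ¬ adj q)).card ≤ P.card :=
      Finset.card_le_card (Finset.filter_subset _ _)
    omega
  have hQ3 : Q3c ≤ nontrivEnergy A := by
    rw [hQ3c]
    exact q3_le_nontriv A (fun x => (x : ℝ)) (fun _ => rfl)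
  have hQ4 : Q4c ≤ 2 * nontrivEnergy A := by
    rw [hQ4c]
    exact q4_le_nontriv A (fun x => (x : ℝ)) (fun _ => rfl)
  have hmain : 2 * Bad.card ≤
      2 * ((m + 6) * (nontrivEnergy A * (m + 2)!)) +
        ((m + 5) * (m + 5) - (m + 5)) * (2 * nontrivEnergy A * (m + 1)!) := by
    have h1 : Bad.card ≤ ∑ q ∈ P, (bp q).card :=
      (Finset.card_le_card hsubBad).trans Finset.card_biUnion_le
    have h2 : ∑ q ∈ P, (bp q).card =
        ∑ q ∈ P.filter adj, (bp q).card +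
          ∑ q ∈ P.filter (fun q => ¬ adj q), (bp q).card :=
      (Finset.sum_filter_add_sum_filter_not P adj _).symm
    have h3 : ∑ q ∈ P.filter adj, (bp q).card ≤ (m + 6) * (Q3c * (m + 2)!) := by
      calc _ ≤ (P.filter adj).card • (Q3c * (m + 2)!) :=
            Finset.sum_le_card_nsmul _ _ _ hadjbound
        _ = (P.filter adj).card * (Q3c * (m + 2)!) := by rw [smul_eq_mul]
        _ ≤ (m + 6) * (Q3c * (m + 2)!) := Nat.mul_le_mul_right _ hadjcard
    have h4 : ∑ q ∈ P.filter (fun q => ¬ adj q), (bp q).card ≤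
        (P.filter (fun q => ¬ adj q)).card * (Q4c * (m + 1)!) := by
      calc _ ≤ (P.filter (fun q => ¬ adj q)).card • (Q4c * (m + 1)!) :=
            Finset.sum_le_card_nsmul _ _ _ hdisbound
        _ = _ := by rw [smul_eq_mul]
    have h5 : 2 * ((P.filter (fun q => ¬ adj q)).card * (Q4c * (m + 1)!)) ≤
        ((m + 5) * (m + 5) - (m + 5)) * (2 * nontrivEnergy A * (m + 1)!) := by
      have he : 2 * ((P.filter (fun q => ¬ adj q)).card * (Q4c * (m + 1)!)) =
          (2 * (P.filter (fun q => ¬ adj q)).card) * (Q4c * (m + 1)!) := by ring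
      rw [he]
      apply Nat.mul_le_mul hdiscard
      have : 2 * nontrivEnergy A * (m + 1)! = (2 * nontrivEnergy A) * (m + 1)! := rfl
      rw [this]
      exact Nat.mul_le_mul_right _ hQ4
    have h6 : 2 * ((m + 6) * (Q3c * (m + 2)!)) ≤
        2 * ((m + 6) * (nontrivEnergy A * (m + 2)!)) := by
      apply Nat.mul_le_mul_left
      apply Nat.mul_le_mul_left
      exact Nat.mul_le_mul_right _ hQ3
    have h7 := Nat.mul_le_mul_left 2 h3
    have h8 := Nat.mul_le_mul_left 2 h4
    have h9 : 2 * Bad.card ≤ 2 * (∑ q ∈ P, (bp q).card) := Nat.mul_le_mul_left 2 h1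
    rw [h2] at h9
    omega
  -- real-number facts
  have hE'' : ((nontrivEnergy A : ℕ) : ℝ) =
      c * ((m : ℝ) + 5) ^ 2 - 2 * ((m : ℝ) + 5) ^ 2 + ((m : ℝ) + 5) := by
    have hsplit := energy_split A
    rw [hcard] at hsplit
    have hc' := congrArg (fun k : ℕ => (k : ℝ)) hsplit
    push_cast at hc'
    push_cast at hE
    linarith
  have hE'nonneg : (0 : ℝ) ≤ ((nontrivEnergy A : ℕ) : ℝ) := Nat.cast_nonneg _
  have hx9 : (9 : ℝ) ≤ (m : ℝ) + 5 := by
    have h9 : 9 ≤ m + 5 := by omega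
    exact_mod_cast h9
  have hxpos : (0 : ℝ) < (m : ℝ) + 5 := by linarith
  have hdx : 9 ≤ δ * ((m : ℝ) + 5) := by
    have h1 : (9 / δ : ℝ) ≤ (⌈9 / δ⌉₊ : ℝ) := Nat.le_ceil _
    have h2 : (⌈9 / δ⌉₊ : ℝ) ≤ (m : ℝ) + 5 := by
      have h2' : ⌈9 / δ⌉₊ ≤ m + 5 := by omega
      exact_mod_cast h2'
    have h3 : (9 / δ : ℝ) ≤ (m : ℝ) + 5 := h1.trans h2
    calc (9 : ℝ) = δ * (9 / δ) := by field_simp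
      _ ≤ δ * ((m : ℝ) + 5) := mul_le_mul_of_nonneg_left h3 hδpos.le
  -- the key inequality over ℝ
  set x : ℝ := (m : ℝ) + 5 with hxdef
  have hineq : (((m : ℝ) + 6) * ((m : ℝ) + 2) + (x * x - x)) * ((nontrivEnergy A : ℕ) : ℝ) <
      x * ((m : ℝ) + 4) * ((m : ℝ) + 3) * ((m : ℝ) + 2) := by
    have hEx : ((nontrivEnergy A : ℕ) : ℝ) = (c - 2) * x ^ 2 + x := by
      rw [hxdef, hE'']; ring
    have hL : (((m : ℝ) + 6) * ((m : ℝ) + 2) + (x * x - x)) * ((nontrivEnergy A : ℕ) : ℝ)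
        = 2 * x ^ 2 * ((nontrivEnergy A : ℕ) : ℝ)
          - (3 * x + 3) * ((nontrivEnergy A : ℕ) : ℝ) := by
      rw [hxdef]; ring
    have hnn : 0 ≤ (3 * x + 3) * ((nontrivEnergy A : ℕ) : ℝ) :=
      mul_nonneg (by linarith) hE'nonneg
    have h2x : 2 * x ^ 2 * ((nontrivEnergy A : ℕ) : ℝ) = (1 - δ) * x ^ 4 + 2 * x ^ 3 := by
      rw [hEx, hδdef]; ring
    have hδx4 : 9 * x ^ 3 ≤ δ * x ^ 4 := by
      calc 9 * x ^ 3 ≤ (δ * x) * x ^ 3 :=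
            mul_le_mul_of_nonneg_right hdx (by positivity)
        _ = δ * x ^ 4 := by ring
    have hx3 : 9 * x ^ 2 ≤ x ^ 3 := by nlinarith [sq_nonneg x]
    have hx2 : 9 * x ≤ x ^ 2 := by nlinarith
    have hR : x * ((m : ℝ) + 4) * ((m : ℝ) + 3) * ((m : ℝ) + 2)
        = x ^ 4 - 6 * x ^ 3 + 11 * x ^ 2 - 6 * x := by
      rw [hxdef]; ring
    rw [hL, hR, h2x]
    linarith
  have hkey : ((2 * ((m + 6) * (nontrivEnergy A * (m + 2)!)) +
      ((m + 5) * (m + 5) - (m + 5)) * (2 * nontrivEnergy A * (m + 1)!) : ℕ) : ℝ) <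
      ((2 * (m + 5)! : ℕ) : ℝ) := by
    have hle : (m + 5) ≤ (m + 5) * (m + 5) := Nat.le_mul_of_pos_left (m + 5) (by omega)
    have hfac5 : ((m + 5)! : ℝ) = x * ((m : ℝ) + 4) * ((m : ℝ) + 3) * ((m : ℝ) + 2)
        * ((m + 1)! : ℝ) := by
      have hf : (m + 5)! = (m + 5) * ((m + 4) * ((m + 3) * ((m + 2) * (m + 1)!))) := by
        rw [show m + 5 = (m + 4) + 1 from rfl, Nat.factorial_succ,
          show m + 4 = (m + 3) + 1 from rfl, Nat.factorial_succ,
          show m + 3 = (m + 2) + 1 from rfl, Nat.factorial_succ,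
          show m + 2 = (m + 1) + 1 from rfl, Nat.factorial_succ]
      rw [hf, hxdef]
      push_cast
      ring
    have hfac2 : ((m + 2)! : ℝ) = ((m : ℝ) + 2) * ((m + 1)! : ℝ) := by
      have hf : (m + 2)! = (m + 2) * (m + 1)! := by
        rw [show m + 2 = (m + 1) + 1 from rfl, Nat.factorial_succ]
      rw [hf]
      push_cast
      ring
    have hFpos : (0 : ℝ) < ((m + 1)! : ℝ) := by exact_mod_cast Nat.factorial_pos _
    have hprod := mul_lt_mul_of_pos_right hineq (by linarith : (0:ℝ) < 2 * ((m + 1)! : ℝ))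
    push_cast [Nat.cast_sub hle]
    rw [hfac2, hfac5]
    have hxx : ((m : ℝ) + 5) * ((m : ℝ) + 5) - ((m : ℝ) + 5) = x * x - x := by
      rw [hxdef]
    rw [hxx]
    linarith [hprod]
  have hkeyN : 2 * ((m + 6) * (nontrivEnergy A * (m + 2)!)) +
      ((m + 5) * (m + 5) - (m + 5)) * (2 * nontrivEnergy A * (m + 1)!) < 2 * (m + 5)! := by
    exact_mod_cast hkey
  have hBadlt : Bad.card < (m + 5)! := by omega
  have hcardE : Fintype.card (Fin (m + 5) ≃ {x // x ∈ A}) = (m + 5)! := by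
    rw [Fintype.card_equiv ((Fintype.equivFinOfCardEq hcardα).symm), Fintype.card_fin]
  have hex : ∃ σ : Fin (m + 5) ≃ {x // x ∈ A}, σ ∉ Bad := by
    by_contra h
    push_neg at h
    have hsub : (univ : Finset (Fin (m + 5) ≃ {x // x ∈ A})) ⊆ Bad := fun σ _ => h σ
    have hcc := Finset.card_le_card hsub
    rw [Finset.card_univ, hcardE] at hcc
    omega
  obtain ⟨σ, hσ⟩ := hex
  refine ⟨σ, ?_⟩
  by_contra hni
  exact hσ (by rw [hBad, mem_filter]; exact ⟨mem_univ _, hni⟩)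
end

section
/- Let A be a set of n distinct reals, n ≥ 4, and let a be a uniformly random cyclic arrangement of A. Then the expected number of distinct values among the n cyclic absolute differences satisfies E(|d(a)|) ≥ n − (1/2)·n²/((n-1)(n-2)) − (E(A,A) − 2n² + n)/(n(n-3)), where E(A,A) is the additive energy of A. -/
section AuxStmt18
open scoped Classical

lemma sumMin_step (n : ℕ) :
    ∑ k ∈ Finset.range (n+2), min k (n+1-k) = (∑ k ∈ Finset.range n, min k (n-1-k)) + n := by
  rw [Finset.sum_range_succ', Finset.sum_range_succ]
  have h1 : ∀ k ∈ Finset.range n, min (k+1) (n+1-(k+1)) = min k (n-1-k) + 1 := by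
    intro k hk
    rw [Finset.mem_range] at hk
    have : n + 1 - (k+1) = (n - 1 - k) + 1 := by omega
    rw [this]; omega
  rw [Finset.sum_congr rfl h1, Finset.sum_add_distrib]
  simp [Finset.card_range]

lemma sumMin_le (n : ℕ) : 4 * ∑ k ∈ Finset.range n, min k (n-1-k) ≤ n^2 := by
  have key : ∀ m : ℕ, (4 * ∑ k ∈ Finset.range m, min k (m-1-k) ≤ m^2) ∧
      (4 * ∑ k ∈ Finset.range (m+1), min k (m-k) ≤ (m+1)^2) := by
    intro m
    induction m with
    | zero => simp
    | succ p ih =>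
      refine ⟨by simpa using ih.2, ?_⟩
      have hs := sumMin_step p
      have : p + 1 - 1 = p := by omega
      rw [this] at *
      have h2 : 4 * ∑ k ∈ Finset.range (p+2), min k (p+1-k) ≤ p^2 + 4*p := by
        rw [hs]; have := ih.1; omega
      nlinarith
  have := (key n).1
  exact this

lemma collision_bound {α β : Type*} [Fintype α] (f : α → β) :
    2 * Fintype.card α ≤ 2 * (Finset.univ.image f).card +
      ((Finset.univ ×ˢ Finset.univ).filter
        (fun p : α × α => p.1 ≠ p.2 ∧ f p.1 = f p.2)).card := by
  classical
  set I := Finset.univ.image f with hI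
  have hcard : Fintype.card α = ∑ b ∈ I, (Finset.univ.filter (fun a => f a = b)).card := by
    rw [← Finset.card_univ]
    exact Finset.card_eq_sum_card_fiberwise (fun x _ => Finset.mem_image_of_mem f (Finset.mem_univ x))
  have hcoll : ((Finset.univ ×ˢ Finset.univ).filter
        (fun p : α × α => p.1 ≠ p.2 ∧ f p.1 = f p.2)).card
      = ∑ b ∈ I, ((Finset.univ.filter (fun a => f a = b)).card *
          (Finset.univ.filter (fun a => f a = b)).card
          - (Finset.univ.filter (fun a => f a = b)).card) := by
    rw [Finset.card_eq_sum_card_fiberwise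
      (f := fun p : α × α => f p.1) (t := I)
      (fun p hp => by
        exact Finset.mem_image_of_mem f (Finset.mem_univ p.1))]
    refine Finset.sum_congr rfl (fun b _ => ?_)
    rw [← Finset.offDiag_card]
    congr 1
    ext p
    simp only [Finset.mem_filter, Finset.mem_product, Finset.mem_univ, true_and,
      Finset.mem_offDiag]
    constructor
    · rintro ⟨⟨hne, hfe⟩, hb⟩
      exact ⟨by simpa [hb] using hb, ⟨by rw [← hfe]; exact hb, hne⟩⟩
    · rintro ⟨h1, h2, hne⟩
      exact ⟨⟨hne, by rw [h1, h2]⟩, h1⟩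
  rw [hcard, hcoll, Finset.mul_sum]
  have : 2 * I.card = ∑ _b ∈ I, 2 := by simp [Finset.mul_sum, mul_comm]
  rw [this, ← Finset.sum_add_distrib]
  refine Finset.sum_le_sum (fun b hb => ?_)
  have hpos : 1 ≤ (Finset.univ.filter (fun a => f a = b)).card := by
    rw [hI] at hb
    obtain ⟨a, _, ha⟩ := Finset.mem_image.mp hb
    exact Finset.card_pos.mpr ⟨a, by simp [ha]⟩
  generalize (Finset.univ.filter (fun a => f a = b)).card = k at hpos ⊢
  rcases Nat.lt_or_ge k 2 with h | h
  · interval_cases k <;> omega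
  · obtain ⟨j, rfl⟩ : ∃ j, k = j + 2 := ⟨k - 2, by omega⟩
    have hx : (j+2) * (j+2) = j*j + 4*j + 4 := by ring
    omega

lemma extGen' {n : ℕ} {A : Finset ℝ} (hA : Fintype.card {x // x ∈ A} = n)
    {k : ℕ} (idx : Fin k → Fin n) (hidx : Function.Injective idx)
    (v : Fin k → {x // x ∈ A}) (hv : Function.Injective v) :
    (Finset.univ.filter (fun σ : Fin n ≃ {x // x ∈ A} => ∀ m, σ (idx m) = v m)).card
      ≤ Nat.factorial (n - k) := by
  classical
  rw [← Fintype.card_subtype]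
  set S : Finset (Fin n) := Finset.univ.image idx with hS
  set T : Finset {x // x ∈ A} := Finset.univ.image v with hT
  have hScard : S.card = k := by
    rw [hS, Finset.card_image_of_injective _ hidx, Finset.card_univ, Fintype.card_fin]
  have hTcard : T.card = k := by
    rw [hT, Finset.card_image_of_injective _ hv, Finset.card_univ, Fintype.card_fin]
  have hmem : ∀ (σ : Fin n ≃ {x // x ∈ A}), (∀ m, σ (idx m) = v m) →
      ∀ x : Fin n, x ∉ S → σ x ∉ T := by
    intro σ hσ x hx hmem
    obtain ⟨m, _, hm⟩ := Finset.mem_image.mp hmem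
    rw [← hσ m] at hm
    exact hx (Finset.mem_image.mpr ⟨m, Finset.mem_univ m, σ.injective hm⟩)
  let Φ : {σ : Fin n ≃ {x // x ∈ A} // ∀ m, σ (idx m) = v m} →
      ({x // x ∈ Sᶜ} ↪ {y // y ∈ Tᶜ}) := fun σ =>
    ⟨fun x => ⟨σ.1 x.1, Finset.mem_compl.mpr
      (hmem σ.1 σ.2 x.1 (Finset.mem_compl.mp x.2))⟩,
     fun x y hxy => Subtype.ext (σ.1.injective (by
       simpa using congrArg Subtype.val hxy))⟩
  have hΦ : Function.Injective Φ := by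
    intro σ τ hστ
    apply Subtype.ext
    apply Equiv.ext
    intro x
    by_cases hx : x ∈ S
    · obtain ⟨m, _, hm⟩ := Finset.mem_image.mp hx
      rw [← hm, σ.2 m, τ.2 m]
    · have := congrArg (fun (e : {x // x ∈ Sᶜ} ↪ {y // y ∈ Tᶜ}) =>
        (e ⟨x, Finset.mem_compl.mpr hx⟩ : {y // y ∈ Tᶜ}).1) hστ
      exact this
  have := Fintype.card_le_of_injective Φ hΦ
  rwa [Fintype.card_embedding_eq, Fintype.card_coe, Fintype.card_coe,
    Finset.card_compl, Finset.card_compl, Fintype.card_fin, hA, hScard, hTcard,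
    Nat.descFactorial_self] at this

lemma count3 {n : ℕ} {A : Finset ℝ} (hA : Fintype.card {x // x ∈ A} = n)
    (i₁ i₂ i₃ : Fin n) (h12 : i₁ ≠ i₂) (h13 : i₁ ≠ i₃) (h23 : i₂ ≠ i₃)
    (Q : ℝ → ℝ → ℝ → Prop) (𝒯 : Finset (ℝ × ℝ × ℝ))
    (h𝒯 : ∀ σ : Fin n ≃ {x // x ∈ A}, Q (σ i₁) (σ i₂) (σ i₃) →
      ((σ i₁ : ℝ), ((σ i₂ : ℝ), (σ i₃ : ℝ))) ∈ 𝒯) :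
    (Finset.univ.filter (fun σ : Fin n ≃ {x // x ∈ A} =>
        Q (σ i₁) (σ i₂) (σ i₃))).card ≤ Nat.factorial (n - 3) * 𝒯.card := by
  set f : (Fin n ≃ {x // x ∈ A}) → ℝ × ℝ × ℝ :=
    fun σ => ((σ i₁ : ℝ), ((σ i₂ : ℝ), (σ i₃ : ℝ))) with hf
  rw [Finset.card_eq_sum_card_fiberwise (f := f) (t := 𝒯)
    (fun σ hσ => h𝒯 σ (Finset.mem_filter.mp hσ).2)]
  have hidx : Function.Injective ![i₁, i₂, i₃] := by
    intro a b hab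
    fin_cases a <;> fin_cases b <;> simp_all [Fin.ext_iff] <;> omega
  calc ∑ t ∈ 𝒯, ((Finset.univ.filter (fun σ : Fin n ≃ {x // x ∈ A} =>
        Q (σ i₁) (σ i₂) (σ i₃))).filter (fun σ => f σ = t)).card
      ≤ ∑ _t ∈ 𝒯, Nat.factorial (n - 3) := by
        refine Finset.sum_le_sum (fun t _ => ?_)
        rcases Finset.eq_empty_or_nonempty ((Finset.univ.filter
            (fun σ : Fin n ≃ {x // x ∈ A} => Q (σ i₁) (σ i₂) (σ i₃))).filter
            (fun σ => f σ = t)) with he | ⟨σ₀, hσ₀⟩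
        · simp [he]
        · have hsub : ((Finset.univ.filter (fun σ : Fin n ≃ {x // x ∈ A} =>
              Q (σ i₁) (σ i₂) (σ i₃))).filter (fun σ => f σ = t)) ⊆
              Finset.univ.filter (fun σ : Fin n ≃ {x // x ∈ A} =>
                ∀ m, σ (![i₁, i₂, i₃] m) = (σ₀ ∘ ![i₁, i₂, i₃]) m) := by
            intro σ hσ
            have ht : f σ = t := (Finset.mem_filter.mp hσ).2
            have ht0 : f σ₀ = t := (Finset.mem_filter.mp hσ₀).2
            rw [← ht0] at ht
            simp only [hf, Prod.mk.injEq] at ht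
            refine Finset.mem_filter.mpr ⟨Finset.mem_univ _, fun m => ?_⟩
            fin_cases m
            · simpa using Subtype.ext ht.1
            · simpa using Subtype.ext ht.2.1
            · simpa using Subtype.ext ht.2.2
          exact le_trans (Finset.card_le_card hsub)
            (extGen' hA _ hidx _ (σ₀.injective.comp hidx))
      _ = Nat.factorial (n - 3) * 𝒯.card := by
        rw [Finset.sum_const, smul_eq_mul, mul_comm]

lemma count4 {n : ℕ} {A : Finset ℝ} (hA : Fintype.card {x // x ∈ A} = n)
    (i₁ i₂ i₃ i₄ : Fin n) (h12 : i₁ ≠ i₂) (h13 : i₁ ≠ i₃) (h14 : i₁ ≠ i₄)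
    (h23 : i₂ ≠ i₃) (h24 : i₂ ≠ i₄) (h34 : i₃ ≠ i₄)
    (Q : ℝ → ℝ → ℝ → ℝ → Prop) (𝒯 : Finset (ℝ × ℝ × ℝ × ℝ))
    (h𝒯 : ∀ σ : Fin n ≃ {x // x ∈ A}, Q (σ i₁) (σ i₂) (σ i₃) (σ i₄) →
      ((σ i₁ : ℝ), ((σ i₂ : ℝ), ((σ i₃ : ℝ), (σ i₄ : ℝ)))) ∈ 𝒯) :
    (Finset.univ.filter (fun σ : Fin n ≃ {x // x ∈ A} =>
        Q (σ i₁) (σ i₂) (σ i₃) (σ i₄))).card ≤ Nat.factorial (n - 4) * 𝒯.card := by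
  set f : (Fin n ≃ {x // x ∈ A}) → ℝ × ℝ × ℝ × ℝ :=
    fun σ => ((σ i₁ : ℝ), ((σ i₂ : ℝ), ((σ i₃ : ℝ), (σ i₄ : ℝ)))) with hf
  rw [Finset.card_eq_sum_card_fiberwise (f := f) (t := 𝒯)
    (fun σ hσ => h𝒯 σ (Finset.mem_filter.mp hσ).2)]
  have hidx : Function.Injective ![i₁, i₂, i₃, i₄] := by
    intro a b hab
    fin_cases a <;> fin_cases b <;> simp_all [Fin.ext_iff]
  calc ∑ t ∈ 𝒯, ((Finset.univ.filter (fun σ : Fin n ≃ {x // x ∈ A} =>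
        Q (σ i₁) (σ i₂) (σ i₃) (σ i₄))).filter (fun σ => f σ = t)).card
      ≤ ∑ _t ∈ 𝒯, Nat.factorial (n - 4) := by
        refine Finset.sum_le_sum (fun t _ => ?_)
        rcases Finset.eq_empty_or_nonempty ((Finset.univ.filter
            (fun σ : Fin n ≃ {x // x ∈ A} => Q (σ i₁) (σ i₂) (σ i₃) (σ i₄))).filter
            (fun σ => f σ = t)) with he | ⟨σ₀, hσ₀⟩
        · simp [he]
        · have hsub : ((Finset.univ.filter (fun σ : Fin n ≃ {x // x ∈ A} =>
              Q (σ i₁) (σ i₂) (σ i₃) (σ i₄))).filter (fun σ => f σ = t)) ⊆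
              Finset.univ.filter (fun σ : Fin n ≃ {x // x ∈ A} =>
                ∀ m, σ (![i₁, i₂, i₃, i₄] m) = (σ₀ ∘ ![i₁, i₂, i₃, i₄]) m) := by
            intro σ hσ
            have ht : f σ = t := (Finset.mem_filter.mp hσ).2
            have ht0 : f σ₀ = t := (Finset.mem_filter.mp hσ₀).2
            rw [← ht0] at ht
            simp only [hf, Prod.mk.injEq] at ht
            refine Finset.mem_filter.mpr ⟨Finset.mem_univ _, fun m => ?_⟩
            fin_cases m
            · simpa using Subtype.ext ht.1
            · simpa using Subtype.ext ht.2.1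
            · simpa using Subtype.ext ht.2.2.1
            · simpa using Subtype.ext ht.2.2.2
          exact le_trans (Finset.card_le_card hsub)
            (extGen' hA _ hidx _ (σ₀.injective.comp hidx))
      _ = Nat.factorial (n - 4) * 𝒯.card := by
        rw [Finset.sum_const, smul_eq_mul, mul_comm]

noncomputable def triSet (A : Finset ℝ) : Finset (ℝ × ℝ × ℝ) :=
  (A ×ˢ A ×ˢ A).filter (fun t =>
    (t.1 ≠ t.2.1 ∧ t.1 ≠ t.2.2 ∧ t.2.1 ≠ t.2.2) ∧ |t.2.1 - t.1| = |t.2.2 - t.2.1|)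

lemma tri_bound {n : ℕ} {A : Finset ℝ} (hA : A.card = n) :
    2 * (triSet A).card ≤ n ^ 2 := by
  have hmemA : ∀ t ∈ triSet A, t.2.1 ∈ A := by
    intro t ht
    have := (Finset.mem_filter.mp ht).1
    simp only [Finset.mem_product] at this
    exact this.2.1
  have hfib := Finset.card_eq_sum_card_fiberwise hmemA
  have hkey : ∀ y ∈ A, ∀ t ∈ (triSet A).filter (fun t => t.2.1 = y),
      t.1 ∈ A ∧ t.2.2 ∈ A ∧ t.1 ≠ t.2.2 ∧ t.1 + t.2.2 = 2 * y := by
    intro y hy t ht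
    rw [Finset.mem_filter] at ht
    obtain ⟨ht, hty⟩ := ht
    rw [triSet, Finset.mem_filter] at ht
    obtain ⟨htA, ⟨hd1, hd2, hd3⟩, habs⟩ := ht
    simp only [Finset.mem_product] at htA
    refine ⟨htA.1, htA.2.2, hd2, ?_⟩
    rw [abs_eq_abs] at habs
    rcases habs with h | h
    · rw [hty] at h; linarith
    · exfalso; apply hd2; linarith
  have hW : ∀ y ∈ A, ((triSet A).filter (fun t => t.2.1 = y)).card ≤
      2 * (A.filter (fun x => x < y ∧ 2*y - x ∈ A)).card := by
    intro y hy
    have himg : ((triSet A).filter (fun t => t.2.1 = y)).image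
        (fun t => min t.1 t.2.2) ⊆ A.filter (fun x => x < y ∧ 2*y - x ∈ A) := by
      intro b hb
      obtain ⟨t, ht, hbt⟩ := Finset.mem_image.mp hb
      obtain ⟨hx, hz, hxz, hsum⟩ := hkey y hy t ht
      rcases min_choice t.1 t.2.2 with hm | hm <;> rw [hm] at hbt <;> subst hbt
      · have h1 : t.1 < t.2.2 := lt_of_le_of_ne (min_eq_left_iff.mp hm) hxz
        refine Finset.mem_filter.mpr ⟨hx, by linarith, ?_⟩
        have : 2*y - t.1 = t.2.2 := by linarith
        rw [this]; exact hz
      · have h1 : t.2.2 < t.1 := lt_of_le_of_ne (min_eq_right_iff.mp hm) (Ne.symm hxz)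
        refine Finset.mem_filter.mpr ⟨hz, by linarith, ?_⟩
        have : 2*y - t.2.2 = t.1 := by linarith
        rw [this]; exact hx
    calc ((triSet A).filter (fun t => t.2.1 = y)).card
        ≤ 2 * (((triSet A).filter (fun t => t.2.1 = y)).image
            (fun t => min t.1 t.2.2)).card := by
          apply Finset.card_le_mul_card_image
          intro b hb
          obtain ⟨t₀, ht₀, hbt₀⟩ := Finset.mem_image.mp hb
          obtain ⟨hx₀, hz₀, hxz₀, hsum₀⟩ := hkey y hy t₀ ht₀
          have hsub : (((triSet A).filter (fun t => t.2.1 = y)).filter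
              (fun t => min t.1 t.2.2 = b)) ⊆ {(b, y, 2*y - b), (2*y - b, y, b)} := by
            intro t ht'
            rw [Finset.mem_filter] at ht'
            obtain ⟨ht, hmin⟩ := ht'
            obtain ⟨hx, hz, hxz, hsum⟩ := hkey y hy t ht
            have hty : t.2.1 = y := (Finset.mem_filter.mp ht).2
            have hprod : t = (t.1, t.2.1, t.2.2) := rfl
            rcases min_choice t.1 t.2.2 with hm | hm <;> rw [hm] at hmin
            · have hzz : t.2.2 = 2*y - b := by rw [← hmin]; linarith
              simp only [Finset.mem_insert, Finset.mem_singleton]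
              left
              rw [hprod, hmin, hty, hzz]
            · have hxx : t.1 = 2*y - b := by rw [← hmin]; linarith
              simp only [Finset.mem_insert, Finset.mem_singleton]
              right
              rw [hprod, hmin, hty, hxx]
          calc (((triSet A).filter (fun t => t.2.1 = y)).filter
              (fun t => min t.1 t.2.2 = b)).card
              ≤ ({(b, y, 2*y - b), (2*y - b, y, b)} : Finset (ℝ × ℝ × ℝ)).card :=
                Finset.card_le_card hsub
            _ ≤ 2 := Finset.card_insert_le _ _ |>.trans (by simp)
      _ ≤ 2 * (A.filter (fun x => x < y ∧ 2*y - x ∈ A)).card :=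
          Nat.mul_le_mul_left 2 (Finset.card_le_card himg)
  -- W ≤ min (L, R)
  have hWmin : ∀ y ∈ A, (A.filter (fun x => x < y ∧ 2*y - x ∈ A)).card ≤
      min ((A.filter (· < y)).card) ((A.filter (y < ·)).card) := by
    intro y hy
    refine le_min ?_ ?_
    · apply Finset.card_le_card
      intro x hx
      rw [Finset.mem_filter] at hx ⊢
      exact ⟨hx.1, hx.2.1⟩
    · apply Finset.card_le_card_of_injOn (fun x => 2*y - x)
      · intro x hx
        rw [Finset.mem_coe, Finset.mem_filter] at hx ⊢
        exact ⟨hx.2.2, by have := hx.2.1; linarith⟩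
      · intro a _ b _ hab
        dsimp at hab; linarith
  -- L + R + 1 = n
  have hLR : ∀ y ∈ A, (A.filter (· < y)).card + (A.filter (y < ·)).card + 1 = n := by
    intro y hy
    have h1 := Finset.card_filter_add_card_filter_not (s := A) (p := (· < y))
    have h2 : A.filter (fun x => ¬ x < y) = insert y (A.filter (y < ·)) := by
      ext x
      simp only [Finset.mem_filter, Finset.mem_insert, not_lt]
      constructor
      · rintro ⟨hxA, hge⟩
        rcases eq_or_lt_of_le hge with h | h
        · exact Or.inl h.symm
        · exact Or.inr ⟨hxA, h⟩
      · rintro (rfl | ⟨hxA, h⟩)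
        · exact ⟨hy, le_refl _⟩
        · exact ⟨hxA, le_of_lt h⟩
    rw [h2, Finset.card_insert_of_notMem (by simp)] at h1
    omega
  -- injectivity of L on A
  have hinj : ∀ x ∈ A, ∀ y ∈ A, (A.filter (· < x)).card = (A.filter (· < y)).card → x = y := by
    intro x hx y hy hxy
    by_contra hne
    rcases Ne.lt_or_gt hne with h | h
    · have : (A.filter (· < x)).card < (A.filter (· < y)).card := by
        apply Finset.card_lt_card
        constructor
        · intro z hz
          rw [Finset.mem_filter] at hz ⊢
          exact ⟨hz.1, lt_trans hz.2 h⟩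
        · intro hsub
          have := hsub (Finset.mem_filter.mpr ⟨hx, h⟩)
          rw [Finset.mem_filter] at this
          exact lt_irrefl x this.2
      omega
    · have : (A.filter (· < y)).card < (A.filter (· < x)).card := by
        apply Finset.card_lt_card
        constructor
        · intro z hz
          rw [Finset.mem_filter] at hz ⊢
          exact ⟨hz.1, lt_trans hz.2 h⟩
        · intro hsub
          have := hsub (Finset.mem_filter.mpr ⟨hy, h⟩)
          rw [Finset.mem_filter] at this
          exact lt_irrefl y this.2
      omega
  -- image of L is range n
  have himgL : A.image (fun y => (A.filter (· < y)).card) = Finset.range n := by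
    apply Finset.eq_of_subset_of_card_le
    · intro k hk
      obtain ⟨y, hy, hky⟩ := Finset.mem_image.mp hk
      rw [Finset.mem_range, ← hky, ← hA]
      apply Finset.card_lt_card
      constructor
      · exact Finset.filter_subset _ _
      · intro hsub
        have := hsub hy
        rw [Finset.mem_filter] at this
        exact lt_irrefl y this.2
    · rw [Finset.card_range, ← hA]
      exact le_of_eq (Finset.card_image_of_injOn hinj).symm
  -- final chain
  have hsum2 : ∑ y ∈ A, min ((A.filter (· < y)).card) ((A.filter (y < ·)).card)
      = ∑ k ∈ Finset.range n, min k (n - 1 - k) := by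
    rw [← himgL, Finset.sum_image hinj]
    refine Finset.sum_congr rfl (fun y hy => ?_)
    have := hLR y hy
    congr 1
    omega
  calc 2 * (triSet A).card = 2 * ∑ y ∈ A, ((triSet A).filter (fun t => t.2.1 = y)).card := by
        rw [hfib]
    _ ≤ 2 * ∑ y ∈ A, 2 * min ((A.filter (· < y)).card) ((A.filter (y < ·)).card) := by
        apply Nat.mul_le_mul_left
        apply Finset.sum_le_sum
        intro y hy
        exact le_trans (hW y hy) (Nat.mul_le_mul_left 2 (hWmin y hy))
    _ = 4 * ∑ y ∈ A, min ((A.filter (· < y)).card) ((A.filter (y < ·)).card) := by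
        rw [← Finset.mul_sum]; ring
    _ = 4 * ∑ k ∈ Finset.range n, min k (n - 1 - k) := by rw [hsum2]
    _ ≤ n ^ 2 := sumMin_le n

noncomputable def quadSet (A : Finset ℝ) : Finset (ℝ × ℝ × ℝ × ℝ) :=
  (A ×ˢ A ×ˢ A ×ˢ A).filter (fun q =>
    (q.1 ≠ q.2.1 ∧ q.1 ≠ q.2.2.1 ∧ q.1 ≠ q.2.2.2 ∧ q.2.1 ≠ q.2.2.1 ∧
      q.2.1 ≠ q.2.2.2 ∧ q.2.2.1 ≠ q.2.2.2) ∧ |q.2.1 - q.1| = |q.2.2.2 - q.2.2.1|)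

lemma quad_bound {n : ℕ} {A : Finset ℝ} (hA : A.card = n) :
    (quadSet A).card + 4 * n ^ 2 ≤ 2 * addEnergy A + 2 * n := by
  set Ef := (((A ×ˢ A) ×ˢ (A ×ˢ A)).filter
    (fun p => p.1.1 + p.1.2 = p.2.1 + p.2.2)) with hEf
  set S₁ := (A ×ˢ A).image (fun p => (p, p)) with hS₁
  set S₂ := (A ×ˢ A).image (fun p => (p, (p.2, p.1))) with hS₂
  have hS₁card : S₁.card = n ^ 2 := by
    rw [hS₁, Finset.card_image_of_injective _ (fun a b h => (Prod.mk.injEq _ _ _ _).mp h |>.1),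
      Finset.card_product, hA]; ring
  have hS₂card : S₂.card = n ^ 2 := by
    rw [hS₂, Finset.card_image_of_injective _ (fun a b h => (Prod.mk.injEq _ _ _ _).mp h |>.1),
      Finset.card_product, hA]; ring
  have hinter : S₁ ∩ S₂ = A.image (fun a => ((a, a), (a, a))) := by
    ext e
    simp only [hS₁, hS₂, Finset.mem_inter, Finset.mem_image, Finset.mem_product]
    constructor
    · rintro ⟨⟨p, ⟨hp1, hp2⟩, rfl⟩, ⟨q, ⟨hq1, hq2⟩, he⟩⟩
      obtain ⟨a, b⟩ := p
      have h1 : q = (a, b) := congrArg Prod.fst he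
      subst h1
      have h2 : b = a := by
        have := congrArg (fun x : (ℝ × ℝ) × (ℝ × ℝ) => x.2.1) he
        simpa using this
      subst h2
      exact ⟨b, hp1, rfl⟩
    · rintro ⟨a, ha, rfl⟩
      exact ⟨⟨(a, a), ⟨ha, ha⟩, rfl⟩, ⟨(a, a), ⟨ha, ha⟩, rfl⟩⟩
  have hintercard : (S₁ ∩ S₂).card = n := by
    rw [hinter, Finset.card_image_of_injective _ (fun a b h => by
      simpa using (Prod.mk.injEq _ _ _ _).mp h |>.1), hA]
  have hTrivsub : S₁ ∪ S₂ ⊆ Ef := by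
    intro e he
    rcases Finset.mem_union.mp he with h | h
    · obtain ⟨p, hp, rfl⟩ := Finset.mem_image.mp h
      rw [hEf, Finset.mem_filter]
      exact ⟨Finset.mem_product.mpr ⟨hp, hp⟩, rfl⟩
    · obtain ⟨p, hp, rfl⟩ := Finset.mem_image.mp h
      rw [hEf, Finset.mem_filter]
      refine ⟨Finset.mem_product.mpr ⟨hp, ?_⟩, by ring⟩
      rw [Finset.mem_product] at hp ⊢
      exact ⟨hp.2, hp.1⟩
  have hTrivcard : (S₁ ∪ S₂).card + n = 2 * n ^ 2 := by
    have := Finset.card_union_add_card_inter S₁ S₂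
    rw [hS₁card, hS₂card, hintercard] at this
    omega
  -- the map Φ
  set Φ : ℝ × ℝ × ℝ × ℝ → (ℝ × ℝ) × (ℝ × ℝ) := fun q =>
    if q.2.1 - q.1 = q.2.2.2 - q.2.2.1 then ((q.1, q.2.2.2), (q.2.1, q.2.2.1))
    else ((q.1, q.2.2.1), (q.2.1, q.2.2.2)) with hΦ
  have hmaps : ∀ q ∈ quadSet A, Φ q ∈ Ef \ (S₁ ∪ S₂) := by
    intro q hq
    rw [quadSet, Finset.mem_filter] at hq
    obtain ⟨hqA, ⟨h12, h13, h14, h23, h24, h34⟩, habs⟩ := hq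
    simp only [Finset.mem_product] at hqA
    obtain ⟨ha1, ha2, ha3, ha4⟩ := hqA
    rw [abs_eq_abs] at habs
    rw [Finset.mem_sdiff]
    by_cases hc : q.2.1 - q.1 = q.2.2.2 - q.2.2.1
    · constructor
      · rw [hEf, Finset.mem_filter, hΦ]
        simp only [hc, if_pos]
        exact ⟨Finset.mem_product.mpr ⟨Finset.mem_product.mpr ⟨ha1, ha4⟩,
          Finset.mem_product.mpr ⟨ha2, ha3⟩⟩, by linarith⟩
      · intro hmem
        rw [hΦ] at hmem
        simp only [hc, if_pos] at hmem
        rcases Finset.mem_union.mp hmem with h | h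
        · obtain ⟨p, _, he⟩ := Finset.mem_image.mp h
          have e1 : p.1 = q.1 := by
            have := congrArg (fun x : (ℝ × ℝ) × (ℝ × ℝ) => x.1.1) he; simpa using this
          have e2 : p.1 = q.2.1 := by
            have := congrArg (fun x : (ℝ × ℝ) × (ℝ × ℝ) => x.2.1) he; simpa using this
          exact h12 (e1 ▸ e2)
        · obtain ⟨p, _, he⟩ := Finset.mem_image.mp h
          have e1 : p.2 = q.2.2.2 := by
            have := congrArg (fun x : (ℝ × ℝ) × (ℝ × ℝ) => x.1.2) he; simpa using this
          have e2 : p.2 = q.2.1 := by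
            have := congrArg (fun x : (ℝ × ℝ) × (ℝ × ℝ) => x.2.1) he; simpa using this
          exact h24 ((e1 ▸ e2).symm ▸ rfl)
    · have hc2 : q.2.1 - q.1 = q.2.2.1 - q.2.2.2 := by
        rcases habs with h | h
        · exact absurd h hc
        · linarith
      constructor
      · rw [hEf, Finset.mem_filter, hΦ]
        simp only [hc, if_neg, if_false]
        exact ⟨Finset.mem_product.mpr ⟨Finset.mem_product.mpr ⟨ha1, ha3⟩,
          Finset.mem_product.mpr ⟨ha2, ha4⟩⟩, by linarith⟩
      · intro hmem
        rw [hΦ] at hmem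
        simp only [hc, if_neg, if_false] at hmem
        rcases Finset.mem_union.mp hmem with h | h
        · obtain ⟨p, _, he⟩ := Finset.mem_image.mp h
          have e1 : p.1 = q.1 := by
            have := congrArg (fun x : (ℝ × ℝ) × (ℝ × ℝ) => x.1.1) he; simpa using this
          have e2 : p.1 = q.2.1 := by
            have := congrArg (fun x : (ℝ × ℝ) × (ℝ × ℝ) => x.2.1) he; simpa using this
          exact h12 (e1 ▸ e2)
        · obtain ⟨p, _, he⟩ := Finset.mem_image.mp h
          have e1 : p.2 = q.2.2.1 := by
            have := congrArg (fun x : (ℝ × ℝ) × (ℝ × ℝ) => x.1.2) he; simpa using this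
          have e2 : p.2 = q.2.1 := by
            have := congrArg (fun x : (ℝ × ℝ) × (ℝ × ℝ) => x.2.1) he; simpa using this
          exact h23 ((e1 ▸ e2).symm ▸ rfl)
  -- fibers of Φ on quadSet have size ≤ 2
  have hfiber : (quadSet A).card ≤ 2 * ((quadSet A).image Φ).card := by
    apply Finset.card_le_mul_card_image
    intro e he
    have hsub : (quadSet A).filter (fun q => Φ q = e) ⊆
        ({(e.1.1, e.2.1, e.2.2, e.1.2), (e.1.1, e.2.1, e.1.2, e.2.2)} :
          Finset (ℝ × ℝ × ℝ × ℝ)) := by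
      intro q hq
      rw [Finset.mem_filter] at hq
      obtain ⟨hqA, hqe⟩ := hq
      rw [hΦ] at hqe
      simp only at hqe
      simp only [Finset.mem_insert, Finset.mem_singleton]
      by_cases hc : q.2.1 - q.1 = q.2.2.2 - q.2.2.1
      · rw [if_pos hc] at hqe
        left
        have e1 := congrArg (fun x : (ℝ × ℝ) × (ℝ × ℝ) => x.1.1) hqe
        have e2 := congrArg (fun x : (ℝ × ℝ) × (ℝ × ℝ) => x.1.2) hqe
        have e3 := congrArg (fun x : (ℝ × ℝ) × (ℝ × ℝ) => x.2.1) hqe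
        have e4 := congrArg (fun x : (ℝ × ℝ) × (ℝ × ℝ) => x.2.2) hqe
        simp only at e1 e2 e3 e4
        exact Prod.ext e1 (Prod.ext e3 (Prod.ext e4 e2))
      · rw [if_neg hc] at hqe
        right
        have e1 := congrArg (fun x : (ℝ × ℝ) × (ℝ × ℝ) => x.1.1) hqe
        have e2 := congrArg (fun x : (ℝ × ℝ) × (ℝ × ℝ) => x.1.2) hqe
        have e3 := congrArg (fun x : (ℝ × ℝ) × (ℝ × ℝ) => x.2.1) hqe
        have e4 := congrArg (fun x : (ℝ × ℝ) × (ℝ × ℝ) => x.2.2) hqe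
        simp only at e1 e2 e3 e4
        exact Prod.ext e1 (Prod.ext e3 (Prod.ext e2 e4))
    calc ((quadSet A).filter (fun q => Φ q = e)).card
        ≤ _ := Finset.card_le_card hsub
      _ ≤ 2 := Finset.card_insert_le _ _ |>.trans (by simp)
  have himgsub : (quadSet A).image Φ ⊆ Ef \ (S₁ ∪ S₂) :=
    Finset.image_subset_iff.mpr hmaps
  have hcard2 : ((quadSet A).image Φ).card ≤ Ef.card - (S₁ ∪ S₂).card := by
    calc ((quadSet A).image Φ).card ≤ (Ef \ (S₁ ∪ S₂)).card := Finset.card_le_card himgsub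
      _ = Ef.card - (S₁ ∪ S₂).card := Finset.card_sdiff_of_subset hTrivsub
  have hEcard : addEnergy A = Ef.card := rfl
  have hTrivLe : (S₁ ∪ S₂).card ≤ Ef.card := Finset.card_le_card hTrivsub
  omega

lemma final_real (M S T Q E F0 : ℝ) (hF0 : 0 < F0) (hM : 0 ≤ M)
    (h1 : 2*(M+4)*((M+4)*((M+3)*((M+2)*((M+1)*F0)))) ≤
      2*S + (M+4)*((M+1)*F0*T) + (M+4)*((M+1)*F0*T) + ((M+4)*(M+1))*(F0*Q))
    (h2 : 2*T ≤ (M+4)^2)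
    (h3 : Q + 4*(M+4)^2 ≤ 2*E + 2*(M+4))
    (hQ0 : 0 ≤ Q) :
    ((M+4) - (1/2)*(M+4)^2/((M+3)*(M+2))
      - (E - 2*(M+4)^2 + (M+4))/((M+4)*(M+1))) * ((M+4)*((M+3)*((M+2)*((M+1)*F0)))) ≤ S := by
  set B := E - 2*(M+4)^2 + (M+4) with hB
  have hQ2B : Q ≤ 2*B := by rw [hB]; linarith
  have hB0 : 0 ≤ B := by linarith
  have hne1 : ((M+3)*(M+2)) ≠ 0 := by positivity
  have hne2 : ((M+4)*(M+1)) ≠ 0 := by positivity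
  have hEq : ((M+4) - (1/2)*(M+4)^2/((M+3)*(M+2))
      - B/((M+4)*(M+1))) * ((M+4)*((M+3)*((M+2)*((M+1)*F0))))
      = (M+4)*((M+4)*((M+3)*((M+2)*((M+1)*F0))))
        - (1/2)*(M+4)^2*((M+4)*(M+1)*F0)
        - B*((M+3)*(M+2)*F0) := by
    field_simp
  rw [hEq]
  have c0 : (0:ℝ) ≤ (M+4)*(M+1)*F0 := by positivity
  have hT' : T ≤ (1/2)*(M+4)^2 := by linarith
  have s1 : ((M+4)*(M+1)*F0) * T ≤ ((M+4)*(M+1)*F0) * ((1/2)*(M+4)^2) :=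
    mul_le_mul_of_nonneg_left hT' c0
  have s2 : ((M+4)*(M+1)*F0) * Q ≤ ((M+4)*(M+1)*F0) * (2*B) :=
    mul_le_mul_of_nonneg_left hQ2B c0
  have s3 : B * ((M+4)*(M+1)*F0) ≤ B * ((M+3)*(M+2)*F0) := by
    apply mul_le_mul_of_nonneg_left _ hB0
    have : (M+4)*(M+1) ≤ (M+3)*(M+2) := by nlinarith
    have hF0' : 0 ≤ F0 := le_of_lt hF0
    nlinarith
  nlinarith [h1, s1, s2, s3]

end AuxStmt18

open scoped Classical in
theorem stmt_18 (n : ℕ) (hn : 4 ≤ n) (A : Finset ℝ) (hA : A.card = n) :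
    (∑ σ : Fin n ≃ {x // x ∈ A},
        ((Finset.univ.image
          (fun i : Fin n => |(σ (finRotate n i) : ℝ) - (σ i : ℝ)|)).card : ℝ))
      / (Nat.factorial n : ℝ)
    ≥ (n : ℝ) - (1 / 2) * (n : ℝ) ^ 2 / (((n : ℝ) - 1) * ((n : ℝ) - 2))
        - ((addEnergy A : ℝ) - 2 * (n : ℝ) ^ 2 + (n : ℝ)) / ((n : ℝ) * ((n : ℝ) - 3)) := by
  obtain ⟨m, rfl⟩ : ∃ m, n = m + 4 := ⟨n - 4, by omega⟩
  clear hn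
  have hcard : Fintype.card {x // x ∈ A} = m + 4 := by rw [Fintype.card_coe, hA]
  set r : Equiv.Perm (Fin (m+4)) := finRotate (m+4) with hr
  -- values of r
  have hval : ∀ i : Fin (m+4), ((r i : Fin (m+4)) : ℕ)
      = if (i : ℕ) = m + 3 then 0 else (i : ℕ) + 1 := by
    intro i
    rw [hr, finRotate_succ_apply, Fin.val_add_one]
    by_cases h : i = Fin.last (m+3)
    · simp [h, Fin.val_last]
    · rw [if_neg h, if_neg (by simpa [Fin.ext_iff] using h)]
  have hvlt : ∀ i : Fin (m+4), (i : ℕ) < m + 4 := fun i => i.isLt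
  have hrne : ∀ i, r i ≠ i := by
    intro i h
    have h3 := congrArg Fin.val h
    rw [hval i] at h3
    have := hvlt i
    split_ifs at h3 <;> omega
  have hrrne : ∀ i, r (r i) ≠ i := by
    intro i h
    have h3 := congrArg Fin.val h
    rw [hval (r i), hval i] at h3
    have := hvlt i
    have := hvlt (r i)
    split_ifs at h3 <;> omega
  have hrinj : Function.Injective r := r.injective
  -- the per-permutation inequality
  have hper : ∀ σ : Fin (m+4) ≃ {x // x ∈ A},
      2*(m+4) ≤ 2*((Finset.univ.image
          (fun i : Fin (m+4) => |(σ (r i) : ℝ) - (σ i : ℝ)|)).card)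
        + ((Finset.univ ×ˢ Finset.univ).filter
            (fun p : Fin (m+4) × Fin (m+4) => p.1 ≠ p.2 ∧
              |(σ (r p.1) : ℝ) - (σ p.1 : ℝ)| = |(σ (r p.2) : ℝ) - (σ p.2 : ℝ)|)).card := by
    intro σ
    have h := collision_bound (fun i : Fin (m+4) => |(σ (r i) : ℝ) - (σ i : ℝ)|)
    simp only [Fintype.card_fin] at h
    convert h using 3
    congr!
  -- notation
  set K := (Finset.univ : Finset (Fin (m+4) ≃ {x // x ∈ A})) with hK
  have hKcard : K.card = Nat.factorial (m+4) := by
    rw [hK, Finset.card_univ,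
      Fintype.card_equiv (Fintype.equivOfCardEq (by simp [hcard]))]
    simp
  set U := (Finset.univ ×ˢ Finset.univ : Finset (Fin (m+4) × Fin (m+4))) with hU
  set N : Fin (m+4) × Fin (m+4) → ℕ := fun p =>
    (Finset.univ.filter (fun σ : Fin (m+4) ≃ {x // x ∈ A} => p.1 ≠ p.2 ∧
      |(σ (r p.1) : ℝ) - (σ p.1 : ℝ)| = |(σ (r p.2) : ℝ) - (σ p.2 : ℝ)|)).card with hN
  set S : ℕ := ∑ σ : Fin (m+4) ≃ {x // x ∈ A},
    (Finset.univ.image (fun i : Fin (m+4) => |(σ (r i) : ℝ) - (σ i : ℝ)|)).card with hSdef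
  have hsum1 : 2*(m+4) * Nat.factorial (m+4) ≤ 2*S + ∑ p ∈ U, N p := by
    have hle := Finset.sum_le_sum (fun σ _ => hper σ) (s := K)
    rw [Finset.sum_const, hKcard, smul_eq_mul] at hle
    rw [Finset.sum_add_distrib, ← Finset.mul_sum] at hle
    have hswap : ∑ σ ∈ K, ((Finset.univ ×ˢ Finset.univ).filter
        (fun p : Fin (m+4) × Fin (m+4) => p.1 ≠ p.2 ∧
          |(σ (r p.1) : ℝ) - (σ p.1 : ℝ)| = |(σ (r p.2) : ℝ) - (σ p.2 : ℝ)|)).card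
        = ∑ p ∈ U, N p := by
      rw [hN]
      simp_rw [Finset.card_filter]
      rw [Finset.sum_comm]
    rw [hswap] at hle
    calc 2*(m+4) * Nat.factorial (m+4) = Nat.factorial (m+4) * (2*(m+4)) := by ring
      _ ≤ _ := hle
  -- bounds on N for the three classes
  have hmemTri : ∀ (σ : Fin (m+4) ≃ {x // x ∈ A}) (a b c : Fin (m+4)),
      a ≠ b → a ≠ c → b ≠ c →
      |(σ b : ℝ) - (σ a : ℝ)| = |(σ c : ℝ) - (σ b : ℝ)| →
      ((σ a : ℝ), ((σ b : ℝ), (σ c : ℝ))) ∈ triSet A := by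
    intro σ a b c hab hac hbc habs
    rw [triSet, Finset.mem_filter]
    refine ⟨?_, ⟨?_, ?_, ?_⟩, habs⟩
    · simp only [Finset.mem_product]
      exact ⟨(σ a).2, (σ b).2, (σ c).2⟩
    · exact Subtype.coe_ne_coe.mpr (fun h => hab (σ.injective h))
    · exact Subtype.coe_ne_coe.mpr (fun h => hac (σ.injective h))
    · exact Subtype.coe_ne_coe.mpr (fun h => hbc (σ.injective h))
  have hNbound1 : ∀ p ∈ U.filter (fun p => p.2 = r p.1),
      N p ≤ Nat.factorial (m+1) * (triSet A).card := by
    intro p hp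
    have hp1 : p.2 = r p.1 := (Finset.mem_filter.mp hp).2
    have hd1 : p.1 ≠ r p.1 := fun h => hrne p.1 h.symm
    have hd2 : p.1 ≠ r (r p.1) := fun h => hrrne p.1 h.symm
    have hd3 : r p.1 ≠ r (r p.1) := fun h => hd1 (hrinj h)
    have hcount := count3 hcard p.1 (r p.1) (r (r p.1)) hd1 hd2 hd3
      (fun x y z => |y - x| = |z - y|) (triSet A)
      (fun σ hQ => hmemTri σ p.1 (r p.1) (r (r p.1)) hd1 hd2 hd3 hQ)
    have hsub : (Finset.univ.filter (fun σ : Fin (m+4) ≃ {x // x ∈ A} => p.1 ≠ p.2 ∧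
        |(σ (r p.1) : ℝ) - (σ p.1 : ℝ)| = |(σ (r p.2) : ℝ) - (σ p.2 : ℝ)|)).card
        ≤ (Finset.univ.filter (fun σ : Fin (m+4) ≃ {x // x ∈ A} =>
          (fun x y z : ℝ => |y - x| = |z - y|) (σ p.1) (σ (r p.1)) (σ (r (r p.1))))).card := by
      apply Finset.card_le_card
      intro σ hσ
      rw [Finset.mem_filter] at hσ ⊢
      refine ⟨Finset.mem_univ _, ?_⟩
      have h2 := hσ.2.2
      rw [hp1] at h2
      exact h2
    rw [hN]
    refine le_trans hsub (le_trans hcount ?_)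
    rw [show m + 4 - 3 = m + 1 by omega]
  have hNbound2 : ∀ p ∈ U.filter (fun p => p.1 = r p.2),
      N p ≤ Nat.factorial (m+1) * (triSet A).card := by
    intro p hp
    have hp1 : p.1 = r p.2 := (Finset.mem_filter.mp hp).2
    have hd1 : p.2 ≠ r p.2 := fun h => hrne p.2 h.symm
    have hd2 : p.2 ≠ r (r p.2) := fun h => hrrne p.2 h.symm
    have hd3 : r p.2 ≠ r (r p.2) := fun h => hd1 (hrinj h)
    have hcount := count3 hcard p.2 (r p.2) (r (r p.2)) hd1 hd2 hd3
      (fun x y z : ℝ => |z - y| = |y - x|) (triSet A)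
      (fun σ hQ => hmemTri σ p.2 (r p.2) (r (r p.2)) hd1 hd2 hd3 hQ.symm)
    have hsub : (Finset.univ.filter (fun σ : Fin (m+4) ≃ {x // x ∈ A} => p.1 ≠ p.2 ∧
        |(σ (r p.1) : ℝ) - (σ p.1 : ℝ)| = |(σ (r p.2) : ℝ) - (σ p.2 : ℝ)|)).card
        ≤ (Finset.univ.filter (fun σ : Fin (m+4) ≃ {x // x ∈ A} =>
          (fun x y z : ℝ => |z - y| = |y - x|) (σ p.2) (σ (r p.2)) (σ (r (r p.2))))).card := by
      apply Finset.card_le_card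
      intro σ hσ
      rw [Finset.mem_filter] at hσ ⊢
      refine ⟨Finset.mem_univ _, ?_⟩
      have h2 := hσ.2.2
      rw [hp1] at h2
      exact h2
    rw [hN]
    refine le_trans hsub (le_trans hcount ?_)
    rw [show m + 4 - 3 = m + 1 by omega]
  have hmemQuad : ∀ (σ : Fin (m+4) ≃ {x // x ∈ A}) (a b c d : Fin (m+4)),
      a ≠ b → a ≠ c → a ≠ d → b ≠ c → b ≠ d → c ≠ d →
      |(σ b : ℝ) - (σ a : ℝ)| = |(σ d : ℝ) - (σ c : ℝ)| →
      ((σ a : ℝ), ((σ b : ℝ), ((σ c : ℝ), (σ d : ℝ)))) ∈ quadSet A := by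
    intro σ a b c d hab hac had hbc hbd hcd habs
    rw [quadSet, Finset.mem_filter]
    refine ⟨?_, ⟨?_, ?_, ?_, ?_, ?_, ?_⟩, habs⟩
    · simp only [Finset.mem_product]
      exact ⟨(σ a).2, (σ b).2, (σ c).2, (σ d).2⟩
    · exact Subtype.coe_ne_coe.mpr (fun h => hab (σ.injective h))
    · exact Subtype.coe_ne_coe.mpr (fun h => hac (σ.injective h))
    · exact Subtype.coe_ne_coe.mpr (fun h => had (σ.injective h))
    · exact Subtype.coe_ne_coe.mpr (fun h => hbc (σ.injective h))
    · exact Subtype.coe_ne_coe.mpr (fun h => hbd (σ.injective h))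
    · exact Subtype.coe_ne_coe.mpr (fun h => hcd (σ.injective h))
  have hNbound3 : ∀ p : Fin (m+4) × Fin (m+4), p.1 ≠ p.2 → p.2 ≠ r p.1 → p.1 ≠ r p.2 →
      N p ≤ Nat.factorial m * (quadSet A).card := by
    intro p hne h1 h2
    have hd12 : p.1 ≠ r p.1 := fun h => hrne p.1 h.symm
    have hd13 : p.1 ≠ p.2 := hne
    have hd14 : p.1 ≠ r p.2 := h2
    have hd23 : r p.1 ≠ p.2 := fun h => h1 h.symm
    have hd24 : r p.1 ≠ r p.2 := fun h => hne (hrinj h)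
    have hd34 : p.2 ≠ r p.2 := fun h => hrne p.2 h.symm
    have hcount := count4 hcard p.1 (r p.1) p.2 (r p.2) hd12 hd13 hd14 hd23 hd24 hd34
      (fun x y z w : ℝ => |y - x| = |w - z|) (quadSet A)
      (fun σ hQ => hmemQuad σ p.1 (r p.1) p.2 (r p.2) hd12 hd13 hd14 hd23 hd24 hd34 hQ)
    have hsub : (Finset.univ.filter (fun σ : Fin (m+4) ≃ {x // x ∈ A} => p.1 ≠ p.2 ∧
        |(σ (r p.1) : ℝ) - (σ p.1 : ℝ)| = |(σ (r p.2) : ℝ) - (σ p.2 : ℝ)|)).card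
        ≤ (Finset.univ.filter (fun σ : Fin (m+4) ≃ {x // x ∈ A} =>
          (fun x y z w : ℝ => |y - x| = |w - z|) (σ p.1) (σ (r p.1)) (σ p.2) (σ (r p.2)))).card := by
      apply Finset.card_le_card
      intro σ hσ
      rw [Finset.mem_filter] at hσ ⊢
      exact ⟨Finset.mem_univ _, hσ.2.2⟩
    rw [hN]
    refine le_trans hsub (le_trans hcount ?_)
    rw [show m + 4 - 4 = m by omega]
  -- class cardinalities
  have hc1 : (U.filter (fun p => p.2 = r p.1)).card = m + 4 := by
    have heq : U.filter (fun p => p.2 = r p.1)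
        = Finset.univ.image (fun i : Fin (m+4) => (i, r i)) := by
      ext p
      simp only [Finset.mem_filter, Finset.mem_image, Finset.mem_univ, true_and, hU,
        Finset.mem_product, and_true]
      constructor
      · intro h
        exact ⟨p.1, Prod.ext rfl h.symm⟩
      · rintro ⟨i, rfl⟩
        rfl
    rw [heq, Finset.card_image_of_injective _
      (fun a b h => by simpa using congrArg Prod.fst h)]
    simp
  have hc2 : (U.filter (fun p => p.1 = r p.2)).card = m + 4 := by
    have heq : U.filter (fun p => p.1 = r p.2)
        = Finset.univ.image (fun i : Fin (m+4) => (r i, i)) := by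
      ext p
      simp only [Finset.mem_filter, Finset.mem_image, Finset.mem_univ, true_and, hU,
        Finset.mem_product, and_true]
      constructor
      · intro h
        exact ⟨p.2, Prod.ext h.symm rfl⟩
      · rintro ⟨i, rfl⟩
        rfl
    rw [heq, Finset.card_image_of_injective _
      (fun a b h => by simpa using congrArg Prod.snd h)]
    simp
  -- the generic-pairs class
  set P3 := ((U.filter (fun p => ¬ p.2 = r p.1)).filter
      (fun p => ¬ p.1 = r p.2)).filter (fun p => ¬ p.1 = p.2) with hP3
  have hP3card : P3.card ≤ (m+4) * (m+1) := by
    have hmaps : ∀ p ∈ P3, p.1 ∈ (Finset.univ : Finset (Fin (m+4))) := fun p _ =>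
      Finset.mem_univ _
    rw [Finset.card_eq_sum_card_fiberwise hmaps]
    have hfb : ∀ i ∈ (Finset.univ : Finset (Fin (m+4))),
        (P3.filter (fun p => p.1 = i)).card ≤ m + 1 := by
      intro i _
      have hss : ∀ p ∈ P3.filter (fun p => p.1 = i),
          p.2 ∈ (Finset.univ \ {i, r i, r.symm i} : Finset (Fin (m+4))) := by
        intro p hp
        simp only [hP3, Finset.mem_filter] at hp
        obtain ⟨⟨⟨⟨_, hb1⟩, hb2⟩, hb3⟩, hb4⟩ := hp
        rw [hb4] at hb1 hb2 hb3
        simp only [Finset.mem_sdiff, Finset.mem_univ, true_and, Finset.mem_insert,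
          Finset.mem_singleton]
        push_neg
        refine ⟨fun h => hb3 h.symm, fun h => hb1 h, fun h => ?_⟩
        apply hb2
        rw [h, Equiv.apply_symm_apply]
      have hinj : Set.InjOn (fun p : Fin (m+4) × Fin (m+4) => p.2)
          (P3.filter (fun p => p.1 = i)) := by
        intro p hp q hq hpq
        have hp1 : p.1 = i := (Finset.mem_filter.mp hp).2
        have hq1 : q.1 = i := (Finset.mem_filter.mp hq).2
        exact Prod.ext (hp1.trans hq1.symm) hpq
      have hle := Finset.card_le_card_of_injOn _ hss hinj
      have htriple : ({i, r i, r.symm i} : Finset (Fin (m+4))).card = 3 := by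
        rw [Finset.card_insert_of_notMem, Finset.card_insert_of_notMem,
          Finset.card_singleton]
        · simp only [Finset.mem_singleton]
          intro h
          have h' := congrArg r h
          rw [Equiv.apply_symm_apply] at h'
          exact hrrne i h'
        · simp only [Finset.mem_insert, Finset.mem_singleton]
          push_neg
          refine ⟨fun h => hrne i h.symm, fun h => ?_⟩
          have h' := congrArg r h
          rw [Equiv.apply_symm_apply] at h'
          exact hrne i h'
      rw [Finset.card_sdiff_of_subset (Finset.subset_univ _), htriple, Finset.card_univ,
        Fintype.card_fin] at hle
      omega
    calc ∑ i ∈ Finset.univ, (P3.filter (fun p => p.1 = i)).card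
        ≤ ∑ _i ∈ (Finset.univ : Finset (Fin (m+4))), (m+1) := Finset.sum_le_sum hfb
      _ = (m+4) * (m+1) := by simp [Finset.card_univ, mul_comm]
  -- decomposition of the sum over pairs
  have hdec : ∑ p ∈ U, N p ≤ (m+4) * (Nat.factorial (m+1) * (triSet A).card)
      + (m+4) * (Nat.factorial (m+1) * (triSet A).card)
      + ((m+4) * (m+1)) * (Nat.factorial m * (quadSet A).card) := by
    have e1 := Finset.sum_filter_add_sum_filter_not U (fun p => p.2 = r p.1) N
    have e2 := Finset.sum_filter_add_sum_filter_not
      (U.filter (fun p => ¬ p.2 = r p.1)) (fun p => p.1 = r p.2) N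
    have e3 := Finset.sum_filter_add_sum_filter_not
      ((U.filter (fun p => ¬ p.2 = r p.1)).filter (fun p => ¬ p.1 = r p.2))
      (fun p => p.1 = p.2) N
    have t1 : ∑ p ∈ U.filter (fun p => p.2 = r p.1), N p
        ≤ (m+4) * (Nat.factorial (m+1) * (triSet A).card) := by
      have := Finset.sum_le_card_nsmul _ _ _ hNbound1
      rwa [hc1, smul_eq_mul] at this
    have t2 : ∑ p ∈ (U.filter (fun p => ¬ p.2 = r p.1)).filter (fun p => p.1 = r p.2), N p
        ≤ (m+4) * (Nat.factorial (m+1) * (triSet A).card) := by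
      have hsub : (U.filter (fun p => ¬ p.2 = r p.1)).filter (fun p => p.1 = r p.2)
          ⊆ U.filter (fun p => p.1 = r p.2) :=
        Finset.filter_subset_filter _ (Finset.filter_subset _ _)
      calc ∑ p ∈ (U.filter (fun p => ¬ p.2 = r p.1)).filter (fun p => p.1 = r p.2), N p
          ≤ ∑ p ∈ U.filter (fun p => p.1 = r p.2), N p :=
            Finset.sum_le_sum_of_subset hsub
        _ ≤ (m+4) * (Nat.factorial (m+1) * (triSet A).card) := by
            have := Finset.sum_le_card_nsmul _ _ _ hNbound2
            rwa [hc2, smul_eq_mul] at this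
    have t3 : ∑ p ∈ ((U.filter (fun p => ¬ p.2 = r p.1)).filter
        (fun p => ¬ p.1 = r p.2)).filter (fun p => p.1 = p.2), N p = 0 := by
      apply Finset.sum_eq_zero
      intro p hp
      have hp12 : p.1 = p.2 := (Finset.mem_filter.mp hp).2
      rw [hN]
      rw [Finset.card_eq_zero, Finset.filter_eq_empty_iff]
      intro σ _
      simp [hp12]
    have t4 : ∑ p ∈ P3, N p ≤ ((m+4) * (m+1)) * (Nat.factorial m * (quadSet A).card) := by
      have hb : ∀ p ∈ P3, N p ≤ Nat.factorial m * (quadSet A).card := by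
        intro p hp
        simp only [hP3, Finset.mem_filter] at hp
        exact hNbound3 p hp.2 hp.1.1.2 hp.1.2
      have := Finset.sum_le_card_nsmul _ _ _ hb
      rw [smul_eq_mul] at this
      exact le_trans this (Nat.mul_le_mul_right _ hP3card)
    have hP3eq : ((U.filter (fun p => ¬ p.2 = r p.1)).filter
        (fun p => ¬ p.1 = r p.2)).filter (fun p => ¬ p.1 = p.2) = P3 := rfl
    rw [hP3eq] at e3
    omega
  -- total natural-number inequality
  have htotal : 2*(m+4) * Nat.factorial (m+4) ≤ 2*S
      + (m+4) * (Nat.factorial (m+1) * (triSet A).card)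
      + (m+4) * (Nat.factorial (m+1) * (triSet A).card)
      + ((m+4) * (m+1)) * (Nat.factorial m * (quadSet A).card) := by omega
  -- combinatorial bounds
  have htri := tri_bound hA
  have hquad := quad_bound hA
  -- real versions
  have hfact4 : Nat.factorial (m+4) = (m+4)*((m+3)*((m+2)*((m+1)*Nat.factorial m))) := by
    rw [Nat.factorial_succ, Nat.factorial_succ, Nat.factorial_succ, Nat.factorial_succ]
  have hF0 : (0:ℝ) < (Nat.factorial m : ℝ) := by
    exact_mod_cast Nat.factorial_pos m
  have h1R : 2*((m:ℝ)+4)*(((m:ℝ)+4)*(((m:ℝ)+3)*(((m:ℝ)+2)*(((m:ℝ)+1)*(Nat.factorial m : ℝ)))))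
      ≤ 2*(S:ℝ) + ((m:ℝ)+4)*((((m:ℝ)+1)*(Nat.factorial m : ℝ))*((triSet A).card : ℝ))
        + ((m:ℝ)+4)*((((m:ℝ)+1)*(Nat.factorial m : ℝ))*((triSet A).card : ℝ))
        + (((m:ℝ)+4)*((m:ℝ)+1))*((Nat.factorial m : ℝ)*((quadSet A).card : ℝ)) := by
    have h := htotal
    rw [hfact4, Nat.factorial_succ] at h
    have h' := (Nat.cast_le (α := ℝ)).mpr h
    push_cast at h'
    linarith [h']
  have h2R : 2*((triSet A).card : ℝ) ≤ ((m:ℝ)+4)^2 := by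
    have h' := (Nat.cast_le (α := ℝ)).mpr htri
    push_cast at h'
    linarith [h']
  have h3R : ((quadSet A).card : ℝ) + 4*((m:ℝ)+4)^2 ≤ 2*(addEnergy A : ℝ) + 2*((m:ℝ)+4) := by
    have h' := (Nat.cast_le (α := ℝ)).mpr hquad
    push_cast at h'
    linarith [h']
  have key := final_real (m:ℝ) (S:ℝ) ((triSet A).card : ℝ) ((quadSet A).card : ℝ)
    (addEnergy A : ℝ) (Nat.factorial m : ℝ) hF0 (by positivity)
    (by linarith [h1R]) h2R h3R (Nat.cast_nonneg _)
  -- reduce the goal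
  have hpos : (0:ℝ) < (Nat.factorial (m+4) : ℝ) := by exact_mod_cast Nat.factorial_pos (m+4)
  rw [ge_iff_le, le_div_iff₀ hpos]
  have hcastfact : ((Nat.factorial (m+4) : ℕ) : ℝ)
      = ((m:ℝ)+4)*(((m:ℝ)+3)*(((m:ℝ)+2)*(((m:ℝ)+1)*(Nat.factorial m : ℝ)))) := by
    rw [hfact4]; push_cast; ring
  rw [hcastfact]
  have hsum' : (∑ σ : Fin (m+4) ≃ {x // x ∈ A},
      ((Finset.univ.image (fun i : Fin (m+4) => |(σ (r i) : ℝ) - (σ i : ℝ)|)).card : ℝ))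
      = (S:ℝ) := by
    rw [hSdef]
    exact (Nat.cast_sum _ _).symm
  rw [hsum']
  push_cast
  rw [show ((m:ℝ)+4-1) = (m:ℝ)+3 by ring, show ((m:ℝ)+4-2) = (m:ℝ)+2 by ring,
    show ((m:ℝ)+4-3) = (m:ℝ)+1 by ring]
  linarith [key]
end
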